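/- arXiv:2402.09915 — 5 statements merged into one kernel-verified Lean document; each statement's English description precedes it below -/
import Mathlib

section
/- Let 0 < h < 1/4 and let τ_h be the trapezoid function on T = R/Z vanishing outside (-2h,2h), equal to 1 on [-h,h], and linear on [-2h,-h] and [h,2h]. Then τ̂_h(0) = 3h and for every 1 ≤ p < ∞, (∑_{n∈Z} |τ̂_h(n)|^p)^{1/p} ≤ 3 h^{(p-1)/p}. -/
open MeasureTheory

/-- The `n`-th Fourier coefficient of a 1-periodic function `f : ℝ → ℂ`,
`f̂(n) = ∫₀¹ f(t) e^{-2πint} dt`. -/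
noncomputable def fourierCoefP (f : ℝ → ℂ) (n : ℤ) : ℂ :=
  ∫ t in (0:ℝ)..1, f t * Complex.exp ((-2) * (Real.pi : ℂ) * Complex.I * (n : ℂ) * (t : ℂ))

open Real

section MyAux

lemma my_integral_linear_mul_exp (a b c : ℂ) (hc : c ≠ 0) (x y : ℝ) :
    ∫ t in x..y, (a + b * t) * Complex.exp (c * t) =
      ((a + b*y)/c - b/c^2) * Complex.exp (c*y) - ((a + b*x)/c - b/c^2) * Complex.exp (c*x) := by
  have key : ∀ z : ℝ, HasDerivAt (fun t : ℝ => ((a + b*(t:ℂ))/c - b/c^2) * Complex.exp (c*t))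
      ((a + b*(z:ℂ)) * Complex.exp (c*z)) z := by
    intro z
    have hg : HasDerivAt (fun w : ℂ => (a + b*w)/c - b/c^2) (b/c) (z:ℂ) := by
      simpa using ((((hasDerivAt_id (z:ℂ)).const_mul b).const_add a).div_const c).sub_const (b/c^2)
    have he : HasDerivAt (fun w : ℂ => Complex.exp (c*w)) (Complex.exp (c*(z:ℂ)) * c) (z:ℂ) := by
      simpa using ((hasDerivAt_id (z:ℂ)).const_mul c).cexp
    have h1 := (hg.mul he).comp_ofReal
    convert h1 using 1
    · rfl
    field_simp
    ring
  apply intervalIntegral.integral_eq_sub_of_hasDerivAt (fun t _ => key t)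
  apply Continuous.intervalIntegrable
  fun_prop

lemma my_integral_linear (a b : ℂ) (x y : ℝ) :
    ∫ t in x..y, (a + b * t) =
      (a*y + b*y^2/2) - (a*x + b*x^2/2) := by
  have key : ∀ z : ℝ, HasDerivAt (fun t : ℝ => a*(t:ℂ) + b*(t:ℂ)^2/2)
      (a + b*(z:ℂ)) z := by
    intro z
    have h1 : HasDerivAt (fun w : ℂ => a*w + b*w^2/2) (a + b*(z:ℂ)) (z:ℂ) := by
      have := (((hasDerivAt_id (z:ℂ)).const_mul a).add
        ((((hasDerivAt_pow 2 (z:ℂ))).const_mul b).div_const 2))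
      convert this using 1
      · rfl
      · rfl
      · rfl
      ring
    exact h1.comp_ofReal
  apply intervalIntegral.integral_eq_sub_of_hasDerivAt (fun t _ => key t)
  apply Continuous.intervalIntegrable
  fun_prop

lemma my_II_of_eqOn {f g : ℝ → ℂ} {x y : ℝ} (hg : Continuous g)
    (he : Set.EqOn f g (Set.uIcc x y)) : IntervalIntegrable f volume x y := by
  apply (hg.intervalIntegrable x y).congr
  exact fun z hz => (he (Set.uIoc_subset_uIcc hz)).symm

lemma my_bern_num2 : (bernoulli 2 : ℚ) = 1/6 := by
  rw [show (2:ℕ) = 0 + 1 + 1 by rfl]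
  norm_num [bernoulli]

lemma my_bern2 (h : ℝ) : (Polynomial.aeval h) (Polynomial.bernoulli 2) =
    h^2 - h + 1/6 := by
  rw [Polynomial.aeval_def, ← Polynomial.eval_map]
  simp [Polynomial.bernoulli, Finset.sum_range_succ, bernoulli_zero, bernoulli_one, my_bern_num2]
  ring

lemma my_cos_sum {h : ℝ} (hh : h ∈ Set.Icc (0:ℝ) 1) :
    HasSum (fun n : ℕ => 1/(n:ℝ)^2 * Real.cos (2*π*n*h)) (π^2*(h^2 - h + 1/6)) := by
  have H := hasSum_one_div_nat_pow_mul_cos one_ne_zero hh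
  norm_num [my_bern2] at H
  convert H using 2
  · ring
  · ring

lemma my_sin_sq_sum {h : ℝ} (hh0 : 0 < h) (hh1 : h ≤ 1) :
    HasSum (fun n : ℕ => Real.sin (π*n*h)^2 / (π^2*n^2*h)) ((1-h)/2) := by
  have H1 := hasSum_zeta_two
  have H2 := my_cos_sum (Set.mem_Icc.mpr ⟨hh0.le, hh1⟩)
  have H3 := (H1.sub H2).div_const (2*π^2*h)
  have hπ : (π:ℝ) ≠ 0 := Real.pi_ne_zero
  have hfun : (fun n : ℕ => Real.sin (π*n*h)^2 / (π^2*n^2*h)) =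
      fun n : ℕ => (1/(n:ℝ)^2 - 1/(n:ℝ)^2 * Real.cos (2*π*n*h)) / (2*π^2*h) := by
    funext n
    rcases Nat.eq_zero_or_pos n with rfl | hn
    · simp
    have hn' : (n:ℝ) ≠ 0 := Nat.cast_ne_zero.mpr hn.ne'
    have hsin : Real.sin (π*n*h)^2 = 1/2 - Real.cos (2*(π*n*h))/2 :=
      Real.sin_sq_eq_half_sub (π*n*h)
    rw [show 2*π*(n:ℝ)*h = 2*(π*n*h) by ring, hsin,
      div_eq_div_iff (by positivity) (by positivity)]
    field_simp [hn']
  have hval : (π^2/6 - π^2*(h^2 - h + 1/6)) / (2*π^2*h) = (1-h)/2 := by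
    rw [show π^2/6 - π^2*(h^2 - h + 1/6) = (π^2*h) * (1-h) by ring,
      show 2*π^2*h = (π^2*h) * 2 by ring, mul_div_mul_left _ _ (by positivity)]
  rw [hfun]
  rw [← hval]
  exact H3

noncomputable def myg (h : ℝ) : ℕ → ℝ := fun n => Real.sin (π*(n:ℝ)*h)^2 / (π^2*(n:ℝ)^2*h)

noncomputable def myS (h : ℝ) : ℤ → ℝ :=
  fun n => if n = 0 then h else Real.sin (π*(n:ℝ)*h)^2 / (π^2*(n:ℝ)^2*h)

lemma my_S_hasSum {h : ℝ} (hh0 : 0 < h) (hh1 : h ≤ 1) :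
    HasSum (myS h) 1 := by
  have hg0 : myg h 0 = 0 := by simp [myg]
  have hnat : HasSum (myg h) ((1-h)/2) := my_sin_sq_sum hh0 hh1
  have hpos : HasSum (fun n : ℕ => myS h n) ((1+h)/2) := by
    have hupd := hnat.update 0 h
    rw [hg0] at hupd
    convert hupd using 1
    · rfl
    · funext n
      rcases Nat.eq_zero_or_pos n with rfl | hn
      · simp [Function.update, myS]
      · have h1 : (n:ℤ) ≠ 0 := by exact_mod_cast hn.ne'
        have h2 : n ≠ 0 := hn.ne'
        simp only [myS, myg, if_neg h1]
        rw [Function.update_of_ne h2]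
        simp only [myg]
        push_cast
        ring_nf
    · ring
  have hneg : HasSum (fun n : ℕ => myS h (-(n+1))) ((1-h)/2) := by
    have h1 := (hasSum_nat_add_iff' (f := myg h) 1).mpr hnat
    simp only [Finset.range_one, Finset.sum_singleton, hg0, sub_zero] at h1
    convert h1 using 1
    · rfl
    funext n
    have h2 : (-((n:ℤ)+1)) ≠ 0 := by omega
    simp only [myS, myg, if_neg h2]
    push_cast
    rw [show π*(-((n:ℝ)+1))*h = -(π*((n:ℝ)+1)*h) by ring, Real.sin_neg, neg_sq, neg_sq]
  have htot := HasSum.of_nat_of_neg_add_one hpos hneg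
  have : ((1+h)/2 + (1-h)/2 : ℝ) = 1 := by ring
  rw [this] at htot
  exact htot

lemma my_step1 (h : ℝ) (hh : (h:ℂ) ≠ 0) (c : ℂ) (hc : c ≠ 0) (E2' E1' E1 E2 : ℂ) :
      ((2 + 1/(h:ℂ)*((-h:ℝ):ℂ))/c - (1/(h:ℂ))/c^2) * E1' -
        ((2 + 1/(h:ℂ)*((-(2*h):ℝ):ℂ))/c - (1/(h:ℂ))/c^2) * E2' +
      (((1 + 0*((h:ℝ):ℂ))/c - 0/c^2) * E1 - ((1 + 0*((-h:ℝ):ℂ))/c - 0/c^2) * E1') +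
      (((2 + (-(1/(h:ℂ)))*((2*h:ℝ):ℂ))/c - (-(1/(h:ℂ)))/c^2) * E2 -
        ((2 + (-(1/(h:ℂ)))*((h:ℝ):ℂ))/c - (-(1/(h:ℂ)))/c^2) * E1)
      = (E2 + E2' - E1 - E1') / ((h:ℂ) * c^2) := by
  have e : ∀ X : ℂ, X/c = X*c*(h:ℂ)/((h:ℂ)*c^2) := by
    intro X
    rw [div_eq_div_iff hc (mul_ne_zero hh (pow_ne_zero 2 hc))]
    ring
  have e2 : ∀ X : ℂ, X/c^2 = X*(h:ℂ)/((h:ℂ)*c^2) := by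
    intro X
    rw [div_eq_div_iff (pow_ne_zero 2 hc) (mul_ne_zero hh (pow_ne_zero 2 hc))]
    ring
  push_cast
  simp only [e2, e]
  simp only [div_sub_div_same, ← add_div, div_mul_eq_mul_div]
  rw [div_eq_div_iff (mul_ne_zero hh (pow_ne_zero 2 hc)) (mul_ne_zero hh (pow_ne_zero 2 hc))]
  field_simp
  ring

lemma my_split (h : ℝ) (hh0 : 0 < h) (hh1 : h < 1/4) (τ : ℝ → ℝ)
    (hper : ∀ t, τ (t + 1) = τ t)
    (hdef : ∀ t ∈ Set.Icc (-(1/2) : ℝ) (1/2), τ t = min 1 (max 0 (2 - |t| / h))) (n : ℤ) :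
    fourierCoefP (fun t => (τ t : ℂ)) n =
      (∫ t in (-(2*h):ℝ)..(-h), (2 + (1/(h:ℂ))*t) * Complex.exp ((-2)*(π:ℂ)*Complex.I*n*t))
      + (∫ t in (-h:ℝ)..h, (1 + (0:ℂ)*t) * Complex.exp ((-2)*(π:ℂ)*Complex.I*n*t))
      + (∫ t in (h:ℝ)..(2*h), (2 + (-(1/(h:ℂ)))*t) * Complex.exp ((-2)*(π:ℂ)*Complex.I*n*t)) := by
  have hπ := Real.pi_pos
  set c : ℂ := (-2)*(π:ℂ)*Complex.I*(n:ℂ) with hc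
  set f : ℝ → ℂ := fun t => (τ t : ℂ) * Complex.exp (c * t) with hf
  have hexpc : Complex.exp c = 1 := by
    rw [show c = ((-n : ℤ):ℂ) * (2*(π:ℂ)*Complex.I) by push_cast; ring]
    exact Complex.exp_int_mul_two_pi_mul_I (-n)
  have hper1 : Function.Periodic f 1 := by
    intro t
    simp only [hf]
    rw [hper t, show ((t + 1 : ℝ):ℂ) = (t:ℂ) + 1 by push_cast; ring, mul_add, mul_one,
      Complex.exp_add, hexpc, mul_one]
  have hstep : fourierCoefP (fun t => (τ t : ℂ)) n = ∫ t in (-(1/2):ℝ)..(1/2), f t := by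
    have := hper1.intervalIntegral_add_eq 0 (-(1/2))
    norm_num at this
    rw [fourierCoefP, ← hc]
    simpa [hf] using this
  have hmem : ∀ x y : ℝ, -(1/2) ≤ x → y ≤ 1/2 → ∀ t ∈ Set.Icc x y,
      τ t = min 1 (max 0 (2 - |t| / h)) := fun x y hx hy t ht =>
    hdef t ⟨le_trans hx ht.1, le_trans ht.2 hy⟩
  have eA : Set.EqOn f (fun _ => (0:ℂ)) (Set.uIcc (-(1/2)) (-(2*h))) := by
    intro t ht
    rw [Set.uIcc_of_le (by linarith)] at ht
    have hτ : τ t = 0 := by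
      rw [hmem _ _ le_rfl (by linarith) t ht]
      rw [abs_of_nonpos (by linarith [ht.2])]
      have h2 : (2:ℝ) ≤ -t/h := by rw [le_div_iff₀ hh0]; linarith [ht.2]
      rw [max_eq_left (by linarith), min_eq_right (by norm_num)]
    simp [hf, hτ]
  have eE : Set.EqOn f (fun _ => (0:ℂ)) (Set.uIcc (2*h) (1/2)) := by
    intro t ht
    rw [Set.uIcc_of_le (by linarith)] at ht
    have hτ : τ t = 0 := by
      rw [hmem _ _ (by linarith) le_rfl t ht]
      rw [abs_of_nonneg (by linarith [ht.1])]
      have h2 : (2:ℝ) ≤ t/h := by rw [le_div_iff₀ hh0]; linarith [ht.1]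
      rw [max_eq_left (by linarith), min_eq_right (by norm_num)]
    simp [hf, hτ]
  have eB : Set.EqOn f (fun t => (2 + (1/(h:ℂ))*t) * Complex.exp (c*t))
      (Set.uIcc (-(2*h)) (-h)) := by
    intro t ht
    rw [Set.uIcc_of_le (by linarith)] at ht
    have hτ : τ t = 2 + t/h := by
      rw [hmem _ _ (by linarith) (by linarith) t ht]
      rw [abs_of_nonpos (by linarith [ht.2])]
      have h2 : -t/h ≤ 2 := by rw [div_le_iff₀ hh0]; linarith [ht.1]
      have h3 : (1:ℝ) ≤ -t/h := by rw [le_div_iff₀ hh0]; linarith [ht.2]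
      rw [max_eq_right (by linarith), min_eq_right (by linarith)]
      ring_nf
    simp only [hf, hτ]
    push_cast
    ring_nf
  have eD : Set.EqOn f (fun t => (2 + (-(1/(h:ℂ)))*t) * Complex.exp (c*t))
      (Set.uIcc h (2*h)) := by
    intro t ht
    rw [Set.uIcc_of_le (by linarith)] at ht
    have hτ : τ t = 2 - t/h := by
      rw [hmem _ _ (by linarith) (by linarith) t ht]
      rw [abs_of_nonneg (by linarith [ht.1])]
      have h2 : t/h ≤ 2 := by rw [div_le_iff₀ hh0]; linarith [ht.2]
      have h3 : (1:ℝ) ≤ t/h := by rw [le_div_iff₀ hh0]; linarith [ht.1]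
      rw [max_eq_right (by linarith), min_eq_right (by linarith)]
    simp only [hf, hτ]
    push_cast
    ring_nf
  have eC : Set.EqOn f (fun t => (1 + (0:ℂ)*t) * Complex.exp (c*t))
      (Set.uIcc (-h) h) := by
    intro t ht
    rw [Set.uIcc_of_le (by linarith)] at ht
    have hτ : τ t = 1 := by
      rw [hmem _ _ (by linarith) (by linarith) t ht]
      have h2 : |t|/h ≤ 1 := by
        rw [div_le_iff₀ hh0, one_mul]
        exact abs_le.mpr ⟨ht.1, ht.2⟩
      rw [max_eq_right (by linarith), min_eq_left (by linarith)]
    simp only [hf, hτ]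
    push_cast
    ring_nf
  have iA : IntervalIntegrable f volume (-(1/2)) (-(2*h)) :=
    my_II_of_eqOn continuous_const eA
  have iE : IntervalIntegrable f volume (2*h) (1/2) :=
    my_II_of_eqOn continuous_const eE
  have iB : IntervalIntegrable f volume (-(2*h)) (-h) :=
    my_II_of_eqOn (by fun_prop) eB
  have iC : IntervalIntegrable f volume (-h) h :=
    my_II_of_eqOn (by fun_prop) eC
  have iD : IntervalIntegrable f volume h (2*h) :=
    my_II_of_eqOn (by fun_prop) eD
  rw [hstep,
    ← intervalIntegral.integral_add_adjacent_intervals iA ((iB.trans iC).trans (iD.trans iE)),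
    ← intervalIntegral.integral_add_adjacent_intervals iB (iC.trans (iD.trans iE)),
    ← intervalIntegral.integral_add_adjacent_intervals iC (iD.trans iE),
    ← intervalIntegral.integral_add_adjacent_intervals iD iE,
    intervalIntegral.integral_congr eA, intervalIntegral.integral_congr eB,
    intervalIntegral.integral_congr eC, intervalIntegral.integral_congr eD,
    intervalIntegral.integral_congr eE]
  simp only [intervalIntegral.integral_const, smul_zero]
  ring

lemma my_coef0 (h : ℝ) (hh0 : 0 < h) (hh1 : h < 1/4) (τ : ℝ → ℝ)
    (hper : ∀ t, τ (t + 1) = τ t)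
    (hdef : ∀ t ∈ Set.Icc (-(1/2) : ℝ) (1/2), τ t = min 1 (max 0 (2 - |t| / h))) :
    fourierCoefP (fun t => (τ t : ℂ)) 0 = ((3*h : ℝ) : ℂ) := by
  have hsplit := my_split h hh0 hh1 τ hper hdef 0
  simp only [Int.cast_zero, mul_zero, zero_mul, Complex.exp_zero, mul_one, add_zero] at hsplit
  rw [hsplit, my_integral_linear, my_integral_linear, intervalIntegral.integral_const]
  have hh : (h:ℂ) ≠ 0 := Complex.ofReal_ne_zero.mpr hh0.ne'
  simp only [Complex.real_smul]
  push_cast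
  field_simp
  ring

lemma my_coefne (h : ℝ) (hh0 : 0 < h) (hh1 : h < 1/4) (τ : ℝ → ℝ)
    (hper : ∀ t, τ (t + 1) = τ t)
    (hdef : ∀ t ∈ Set.Icc (-(1/2) : ℝ) (1/2), τ t = min 1 (max 0 (2 - |t| / h)))
    (n : ℤ) (hn : n ≠ 0) :
    fourierCoefP (fun t => (τ t : ℂ)) n =
      (((Real.cos (2*π*n*h) - Real.cos (4*π*n*h)) / (2*π^2*(n:ℝ)^2*h) : ℝ) : ℂ) := by
  have hπ : (π:ℝ) ≠ 0 := Real.pi_ne_zero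
  have hπc : ((π:ℝ):ℂ) ≠ 0 := Complex.ofReal_ne_zero.mpr hπ
  have hnc : ((n:ℤ):ℂ) ≠ 0 := Int.cast_ne_zero.mpr hn
  have hhc : ((h:ℝ):ℂ) ≠ 0 := Complex.ofReal_ne_zero.mpr hh0.ne'
  set c : ℂ := (-2)*(π:ℂ)*Complex.I*(n:ℂ) with hc
  have hcne : c ≠ 0 := by
    rw [hc]
    apply mul_ne_zero (mul_ne_zero (mul_ne_zero (by norm_num) hπc) Complex.I_ne_zero) hnc
  have hsplit := my_split h hh0 hh1 τ hper hdef n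
  rw [← hc] at hsplit
  rw [hsplit, my_integral_linear_mul_exp 2 (1/(h:ℂ)) c hcne,
    my_integral_linear_mul_exp 1 0 c hcne,
    my_integral_linear_mul_exp 2 (-(1/(h:ℂ))) c hcne]
  rw [my_step1 h hhc c hcne (Complex.exp (c * ((-(2*h):ℝ):ℂ))) (Complex.exp (c * ((-h:ℝ):ℂ)))
    (Complex.exp (c * ((h:ℝ):ℂ))) (Complex.exp (c * ((2*h:ℝ):ℂ)))]
  have hE : ∀ x : ℝ, Complex.exp (c * (x:ℂ)) =
      Complex.cos ((2*π*n*x : ℝ):ℂ) - Complex.sin ((2*π*n*x : ℝ):ℂ) * Complex.I := by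
    intro x
    rw [show c * (x:ℂ) = (-(((2*π*(n:ℝ)*x : ℝ):ℂ))) * Complex.I by
        rw [hc]; push_cast; ring,
      Complex.exp_mul_I, Complex.cos_neg, Complex.sin_neg]
    ring
  rw [hE (2*h), hE (-(2*h)), hE (-h), hE h]
  rw [show ((2*π*(n:ℝ)*(-h) : ℝ):ℂ) = -((2*π*(n:ℝ)*h : ℝ):ℂ) by push_cast; ring,
    show ((2*π*(n:ℝ)*(-(2*h)) : ℝ):ℂ) = -((2*π*(n:ℝ)*(2*h) : ℝ):ℂ) by push_cast; ring,
    Complex.cos_neg, Complex.cos_neg, Complex.sin_neg, Complex.sin_neg,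
    show ((2*π*(n:ℝ)*(2*h) : ℝ):ℂ) = ((4*π*(n:ℝ)*h : ℝ):ℂ) by push_cast; ring]
  have hc2 : c^2 = 4*((π:ℝ):ℂ)^2*((n:ℤ):ℂ)^2*(Complex.I^2) := by rw [hc]; ring
  rw [hc2, Complex.I_sq]
  rw [Complex.ofReal_div]
  rw [Complex.ofReal_sub, Complex.ofReal_cos, Complex.ofReal_cos]
  push_cast
  field_simp
  ring

lemma my_norm_bound (h : ℝ) (hh0 : 0 < h) (hh1 : h < 1/4) (τ : ℝ → ℝ)
    (hper : ∀ t, τ (t + 1) = τ t)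
    (hdef : ∀ t ∈ Set.Icc (-(1/2) : ℝ) (1/2), τ t = min 1 (max 0 (2 - |t| / h)))
    (n : ℤ) : ‖fourierCoefP (fun t => (τ t : ℂ)) n‖ ≤ 3 * myS h n := by
  rcases eq_or_ne n 0 with rfl | hn
  · rw [my_coef0 h hh0 hh1 τ hper hdef, Complex.norm_real, myS, if_pos rfl,
      Real.norm_eq_abs, abs_of_nonneg (by positivity)]
  · have hnR : ((n:ℤ):ℝ) ≠ 0 := Int.cast_ne_zero.mpr hn
    have hπ := Real.pi_pos
    have hd : (0:ℝ) < 2*π^2*(n:ℝ)^2*h := by positivity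
    rw [my_coefne h hh0 hh1 τ hper hdef n hn, Complex.norm_real, myS, if_neg hn]
    rw [Real.norm_eq_abs, abs_div, abs_of_pos hd]
    have hcos : Real.cos (2*π*n*h) - Real.cos (4*π*n*h) =
        2 * (Real.sin (3*(π*n*h)) * Real.sin (π*n*h)) := by
      rw [Real.cos_sub_cos]
      rw [show (2*π*(n:ℝ)*h + 4*π*n*h)/2 = 3*(π*n*h) by ring,
        show (2*π*(n:ℝ)*h - 4*π*n*h)/2 = -(π*n*h) by ring, Real.sin_neg]
      ring
    rw [hcos]
    have hsin3 : |Real.sin (3*(π*n*h))| ≤ 3 * |Real.sin (π*n*h)| := by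
      rw [Real.sin_three_mul]
      rw [show 3*Real.sin (π*(n:ℝ)*h) - 4*Real.sin (π*n*h)^3 =
        Real.sin (π*n*h) * (3 - 4*Real.sin (π*n*h)^2) by ring, abs_mul, mul_comm]
      apply mul_le_mul_of_nonneg_right _ (abs_nonneg _)
      rw [abs_le]
      constructor
      · nlinarith [Real.sin_sq_le_one (π*(n:ℝ)*h)]
      · nlinarith [sq_nonneg (Real.sin (π*(n:ℝ)*h))]
    have hnum : |2 * (Real.sin (3*(π*(n:ℝ)*h)) * Real.sin (π*n*h))| ≤
        6 * Real.sin (π*n*h)^2 := by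
      rw [abs_mul, abs_mul, abs_two]
      calc 2 * (|Real.sin (3*(π*(n:ℝ)*h))| * |Real.sin (π*n*h)|)
          ≤ 2 * ((3 * |Real.sin (π*(n:ℝ)*h)|) * |Real.sin (π*n*h)|) := by
            apply mul_le_mul_of_nonneg_left
              (mul_le_mul_of_nonneg_right hsin3 (abs_nonneg _)) (by norm_num)
        _ = 6 * Real.sin (π*n*h)^2 := by
            rw [← sq_abs (Real.sin (π*(n:ℝ)*h))]; ring
    calc |2 * (Real.sin (3*(π*(n:ℝ)*h)) * Real.sin (π*n*h))| / (2*π^2*(n:ℝ)^2*h)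
        ≤ (6 * Real.sin (π*(n:ℝ)*h)^2) / (2*π^2*(n:ℝ)^2*h) := by
          exact div_le_div_of_nonneg_right hnum hd.le
      _ = 3 * (Real.sin (π*(n:ℝ)*h)^2 / (π^2*(n:ℝ)^2*h)) := by
          field_simp
          ring

end MyAux

/-- The trapezoid function `τ_h` (support `(-2h,2h)`, equal to 1 on `[-h,h]`, linear on
`[-2h,-h]` and `[h,2h]`) satisfies `τ̂_h(0) = 3h` and has `ℓ^p` norm of Fourier
coefficients at most `3 h^{(p-1)/p}` for every `1 ≤ p < ∞`. -/
theorem stmt1 (h p : ℝ) (hh0 : 0 < h) (hh1 : h < 1/4) (hp : 1 ≤ p)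
    (τ : ℝ → ℝ)
    (hper : ∀ t, τ (t + 1) = τ t)
    (hdef : ∀ t ∈ Set.Icc (-(1/2) : ℝ) (1/2), τ t = min 1 (max 0 (2 - |t| / h))) :
    fourierCoefP (fun t => (τ t : ℂ)) 0 = (3 * h : ℝ) ∧
    (∑' n : ℤ, ‖fourierCoefP (fun t => (τ t : ℂ)) n‖ ^ p) ^ (1/p) ≤ 3 * h ^ ((p - 1)/p) := by
  have hp0 : (0:ℝ) < p := by linarith
  have hp0' : p ≠ 0 := hp0.ne'
  have hπ := Real.pi_pos
  constructor
  · exact my_coef0 h hh0 hh1 τ hper hdef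
  · have hS := my_S_hasSum hh0 (by linarith : h ≤ 1)
    have hSnn : ∀ n, 0 ≤ myS h n := by
      intro n
      simp only [myS]
      split <;> positivity
    have hSle : ∀ n, myS h n ≤ h := by
      intro n
      simp only [myS]
      split
      · exact le_rfl
      · rename_i hn
        have hnR : ((n:ℤ):ℝ) ≠ 0 := Int.cast_ne_zero.mpr hn
        have hd : (0:ℝ) < π^2*(n:ℝ)^2*h := by positivity
        rw [div_le_iff₀ hd]
        calc Real.sin (π*(n:ℝ)*h)^2 ≤ (π*(n:ℝ)*h)^2 := Real.sin_sq_le_sq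
          _ = h*(π^2*(n:ℝ)^2*h) := by ring
    have hterm : ∀ n : ℤ, ‖fourierCoefP (fun t => (τ t : ℂ)) n‖ ^ p ≤
        3^p * h^(p-1) * myS h n := by
      intro n
      have h1 := my_norm_bound h hh0 hh1 τ hper hdef n
      have h2 : ‖fourierCoefP (fun t => (τ t : ℂ)) n‖ ^ p ≤ (3 * myS h n)^p :=
        Real.rpow_le_rpow (norm_nonneg _) h1 hp0.le
      have h3 : ((3:ℝ) * myS h n)^p = 3^p * (myS h n)^p :=
        Real.mul_rpow (by norm_num) (hSnn n)
      have h4 : (myS h n)^p ≤ h^(p-1) * myS h n := by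
        rcases eq_or_lt_of_le (hSnn n) with he | hlt
        · rw [← he, Real.zero_rpow hp0', mul_zero]
        · have he2 : (myS h n)^p = (myS h n)^(p-1) * (myS h n) := by
            calc (myS h n)^p = (myS h n)^((p-1)+1) := by norm_num
              _ = (myS h n)^(p-1) * (myS h n)^(1:ℝ) := Real.rpow_add hlt _ _
              _ = (myS h n)^(p-1) * (myS h n) := by rw [Real.rpow_one]
          rw [he2]
          exact mul_le_mul_of_nonneg_right
            (Real.rpow_le_rpow (hSnn n) (hSle n) (by linarith)) (hSnn n)
      calc ‖fourierCoefP (fun t => (τ t : ℂ)) n‖ ^ p ≤ (3 * myS h n)^p := h2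
        _ = 3^p * (myS h n)^p := h3
        _ ≤ 3^p * (h^(p-1) * myS h n) := by
            apply mul_le_mul_of_nonneg_left h4 (by positivity)
        _ = 3^p * h^(p-1) * myS h n := by ring
    have hsumR : Summable (fun n : ℤ => 3^p * h^(p-1) * myS h n) :=
      hS.summable.mul_left _
    have hF : Summable (fun n : ℤ => ‖fourierCoefP (fun t => (τ t : ℂ)) n‖ ^ p) :=
      Summable.of_nonneg_of_le (fun n => Real.rpow_nonneg (norm_nonneg _) p) hterm hsumR
    have htsum : (∑' n : ℤ, ‖fourierCoefP (fun t => (τ t : ℂ)) n‖ ^ p) ≤ 3^p * h^(p-1) := by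
      calc (∑' n : ℤ, ‖fourierCoefP (fun t => (τ t : ℂ)) n‖ ^ p)
          ≤ ∑' n : ℤ, 3^p * h^(p-1) * myS h n := Summable.tsum_le_tsum hterm hF hsumR
        _ = 3^p * h^(p-1) * ∑' n : ℤ, myS h n := tsum_mul_left
        _ = 3^p * h^(p-1) := by rw [hS.tsum_eq, mul_one]
    have h6 : (∑' n : ℤ, ‖fourierCoefP (fun t => (τ t : ℂ)) n‖ ^ p) ^ (1/p) ≤
        (3^p * h^(p-1))^(1/p) :=
      Real.rpow_le_rpow (tsum_nonneg (fun n => Real.rpow_nonneg (norm_nonneg _) p))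
        htsum (by positivity)
    have h7 : ((3:ℝ)^p * h^(p-1))^(1/p) = 3 * h^((p-1)/p) := by
      rw [Real.mul_rpow (by positivity) (by positivity),
        ← Real.rpow_mul (by norm_num : (0:ℝ) ≤ 3), mul_one_div, div_self hp0', Real.rpow_one,
        ← Real.rpow_mul hh0.le, mul_one_div]
    rw [h7] at h6
    exact h6
end

section
/- Let P_0, …, P_{N−1} be trigonometric polynomials on T with integer spectrum, and let ν be a positive integer with ν > 2·deg(P_j) for all 0 ≤ j ≤ N−1. Define P(t) := ∏_{j=0}^{N−1} P_j(ν^j t). Then P̂(0) = ∏_{j=0}^{N−1} P̂_j(0) and, for every 1 ≤ p < ∞, ‖P‖_{A^p(T)} = ∏_{j=0}^{N−1} ‖P_j‖_{A^p(T)}. -/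
open MeasureTheory

lemma integral_exp_orth (m n : ℤ) :
    (∫ t in (0:ℝ)..1, Complex.exp (2 * (Real.pi:ℂ) * Complex.I * m * t) *
      Complex.exp ((-2) * (Real.pi:ℂ) * Complex.I * (n:ℂ) * (t:ℂ)))
      = if m = n then 1 else 0 := by
  have key : ∀ t : ℝ, Complex.exp (2 * (Real.pi:ℂ) * Complex.I * m * t) *
      Complex.exp ((-2) * (Real.pi:ℂ) * Complex.I * (n:ℂ) * (t:ℂ))
      = Complex.exp ((2 * (Real.pi:ℂ) * Complex.I * ((m:ℂ) - n)) * t) := by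
    intro t; rw [← Complex.exp_add]; ring_nf
  simp_rw [key]
  by_cases h : m = n
  · subst h; simp
  · have hmn : ((m:ℂ) - n) ≠ 0 := by
      rw [sub_ne_zero]
      exact_mod_cast h
    have hc : (2 * (Real.pi:ℂ) * Complex.I * ((m:ℂ) - n)) ≠ 0 := by
      apply mul_ne_zero (mul_ne_zero (mul_ne_zero two_ne_zero _) Complex.I_ne_zero) hmn
      exact_mod_cast Real.pi_ne_zero
    rw [integral_exp_mul_complex hc]
    have h1 : Complex.exp (2 * (Real.pi:ℂ) * Complex.I * ((m:ℂ) - n) * (1:ℝ)) = 1 := by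
      have := Complex.exp_int_mul_two_pi_mul_I (m - n)
      rw [← this]; push_cast; ring_nf
    rw [h1]
    simp [h]

lemma fc_sum {ι : Type*} [DecidableEq ι] (s : Finset ι) (a : ι → ℂ) (m : ι → ℤ) (n : ℤ) :
    fourierCoefP (fun t => ∑ i ∈ s, a i * Complex.exp (2 * (Real.pi:ℂ) * Complex.I * (m i) * t)) n
      = ∑ i ∈ s.filter (fun i => m i = n), a i := by
  unfold fourierCoefP
  simp_rw [Finset.sum_mul]
  rw [intervalIntegral.integral_finset_sum]
  · have : ∀ i ∈ s, (∫ t in (0:ℝ)..1, a i * Complex.exp (2 * (Real.pi:ℂ) * Complex.I * (m i) * t) *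
        Complex.exp ((-2) * (Real.pi:ℂ) * Complex.I * (n:ℂ) * (t:ℂ)))
        = a i * (if m i = n then 1 else 0) := by
      intro i _
      rw [← integral_exp_orth (m i) n, ← intervalIntegral.integral_const_mul]
      congr 1; ext t; ring
    rw [Finset.sum_congr rfl this, Finset.sum_filter]
    simp [mul_ite]
  · intro i _
    apply Continuous.intervalIntegrable
    fun_prop

lemma digits_zero (ν : ℕ) : ∀ (n : ℕ) (e : ℕ → ℤ), (∀ j < n, |e j| < (ν:ℤ)) →
    (∑ j ∈ Finset.range n, e j * (ν:ℤ)^j = 0) → ∀ j < n, e j = 0 := by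
  intro n
  induction n with
  | zero => intro e _ _ j hj; omega
  | succ n ih =>
    intro e he hs j hj
    rw [Finset.sum_range_succ'] at hs
    have hν : (0:ℤ) < ν := lt_of_le_of_lt (abs_nonneg _) (he 0 (Nat.succ_pos n))
    have hfac : ∀ j ∈ Finset.range n, e (j+1) * (ν:ℤ)^(j+1) = (ν:ℤ) * (e (j+1) * (ν:ℤ)^j) :=
      fun j _ => by ring
    rw [Finset.sum_congr rfl hfac, ← Finset.mul_sum, pow_zero, mul_one] at hs
    have hdvd : (ν:ℤ) ∣ e 0 :=
      ⟨-(∑ j ∈ Finset.range n, e (j+1) * (ν:ℤ)^j), by linarith⟩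
    have he0 : e 0 = 0 := Int.eq_zero_of_abs_lt_dvd hdvd (he 0 (Nat.succ_pos n))
    have hrest : ∑ j ∈ Finset.range n, e (j+1) * (ν:ℤ)^j = 0 := by
      rw [he0, add_zero, mul_eq_zero] at hs
      rcases hs with h | h
      · omega
      · exact h
    have hall := ih (fun j => e (j+1)) (fun j hj => he (j+1) (by omega)) hrest
    rcases Nat.eq_zero_or_pos j with h0 | h0
    · rw [h0]; exact he0
    · simpa [Nat.sub_add_cancel h0] using hall (j-1) (by omega)

/-- Riesz-product-type multiplicativity: if `P_j(t) = ∑_{|k| ≤ d_j} c_j(k) e^{2πikt}` are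
trigonometric polynomials with integer spectrum and `ν > 2 d_j` for all `j`, then
`P(t) = ∏_j P_j(ν^j t)` satisfies `P̂(0) = ∏_j P̂_j(0)` and
`‖P‖_{A^p(𝕋)} = ∏_j ‖P_j‖_{A^p(𝕋)}`. -/
theorem stmt7 (p : ℝ) (hp : 1 ≤ p) (N : ℕ) (d : Fin N → ℕ) (c : Fin N → ℤ → ℂ)
    (ν : ℕ) (hν : ∀ j, 2 * d j < ν)
    (P : ℝ → ℂ)
    (hP : ∀ t : ℝ, P t = ∏ j : Fin N, ∑ k ∈ Finset.Icc (-(d j : ℤ)) (d j),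
      c j k * Complex.exp (2 * (Real.pi : ℂ) * Complex.I * (k : ℂ)
        * ((ν : ℂ) ^ (j : ℕ) * (t : ℂ)))) :
    fourierCoefP P 0 = ∏ j : Fin N, c j 0 ∧
    (∑' n : ℤ, ‖fourierCoefP P n‖ ^ p) ^ (1/p)
      = ∏ j : Fin N, (∑ k ∈ Finset.Icc (-(d j : ℤ)) (d j), ‖c j k‖ ^ p) ^ (1/p) := by
  set S : Finset (Fin N → ℤ) := Fintype.piFinset (fun j : Fin N => Finset.Icc (-(d j : ℤ)) (d j))
    with hS
  set σ : (Fin N → ℤ) → ℤ := fun k => ∑ j : Fin N, k j * (ν:ℤ)^(j:ℕ) with hσ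
  -- expansion of P
  have hP' : P = fun t : ℝ => ∑ k ∈ S, (∏ j : Fin N, c j (k j)) *
      Complex.exp (2 * (Real.pi:ℂ) * Complex.I * (σ k) * (t:ℂ)) := by
    funext t
    rw [hP t, Finset.prod_univ_sum]
    refine Finset.sum_congr rfl fun k hk => ?_
    rw [Finset.prod_mul_distrib]
    congr 1
    rw [← Complex.exp_sum]
    congr 1
    have hcast : ((σ k : ℤ) : ℂ) = ∑ j : Fin N, (k j : ℂ) * (ν:ℂ)^(j:ℕ) := by
      rw [hσ]; push_cast; rfl
    rw [hcast, Finset.mul_sum, Finset.sum_mul]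
    exact Finset.sum_congr rfl fun j _ => by ring
  have hfc : ∀ n : ℤ, fourierCoefP P n
      = ∑ k ∈ S.filter (fun k => σ k = n), ∏ j : Fin N, c j (k j) := by
    intro n
    rw [hP']
    exact fc_sum S _ σ n
  -- injectivity
  have hinj : ∀ k ∈ S, ∀ k' ∈ S, σ k = σ k' → k = k' := by
    intro k hk k' hk' hkk
    set e : ℕ → ℤ := fun j => if h : j < N then k ⟨j, h⟩ - k' ⟨j, h⟩ else 0 with he
    have habs : ∀ j < N, |e j| < (ν:ℤ) := by
      intro j hj
      have h1 := Finset.mem_Icc.mp ((Fintype.mem_piFinset.mp hk) ⟨j, hj⟩)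
      have h2 := Finset.mem_Icc.mp ((Fintype.mem_piFinset.mp hk') ⟨j, hj⟩)
      have h3 : 2 * (d ⟨j, hj⟩ : ℤ) < ν := by exact_mod_cast hν ⟨j, hj⟩
      simp only [he, dif_pos hj]
      rw [abs_lt]
      omega
    have hsum : ∑ j ∈ Finset.range N, e j * (ν:ℤ)^j = 0 := by
      rw [← Fin.sum_univ_eq_sum_range (fun j => e j * (ν:ℤ)^j) N]
      have hterm : ∀ j : Fin N, e (j:ℕ) * (ν:ℤ)^(j:ℕ)
          = k j * (ν:ℤ)^(j:ℕ) - k' j * (ν:ℤ)^(j:ℕ) := by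
        intro j; simp only [he, dif_pos j.isLt, Fin.eta]; ring
      rw [Finset.sum_congr rfl fun j _ => hterm j, Finset.sum_sub_distrib]
      rw [hσ] at hkk
      simpa [sub_eq_zero] using hkk
    have hzero := digits_zero ν N e habs hsum
    funext j
    have := hzero (j:ℕ) j.isLt
    simp only [he, dif_pos j.isLt, Fin.eta, sub_eq_zero] at this
    exact this
  -- zero function membership
  have hzero_mem : (fun _ : Fin N => (0:ℤ)) ∈ S := by
    rw [hS, Fintype.mem_piFinset]
    intro j
    simp [Finset.mem_Icc]
  have hσ0 : σ (fun _ : Fin N => (0:ℤ)) = 0 := by simp [hσ]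
  constructor
  · rw [hfc 0]
    have hfilter : S.filter (fun k => σ k = 0) = {fun _ : Fin N => (0:ℤ)} := by
      ext k
      simp only [Finset.mem_filter, Finset.mem_singleton]
      constructor
      · rintro ⟨hk, h0⟩
        exact hinj k hk _ hzero_mem (by rw [h0, hσ0])
      · rintro rfl
        exact ⟨hzero_mem, hσ0⟩
    rw [hfilter, Finset.sum_singleton]
  · have hp0 : p ≠ 0 := by linarith
    have hvanish : ∀ n ∉ S.image σ, ‖fourierCoefP P n‖ ^ p = 0 := by
      intro n hn
      have hempty : S.filter (fun k => σ k = n) = ∅ := by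
        rw [Finset.filter_eq_empty_iff]
        intro k hk h
        exact hn (Finset.mem_image.mpr ⟨k, hk, h⟩)
      rw [hfc n, hempty, Finset.sum_empty, norm_zero, Real.zero_rpow hp0]
    have hterm : ∀ k ∈ S, ‖fourierCoefP P (σ k)‖ ^ p = ∏ j : Fin N, ‖c j (k j)‖ ^ p := by
      intro k hk
      have hfilter : S.filter (fun k' => σ k' = σ k) = {k} := by
        ext k'
        simp only [Finset.mem_filter, Finset.mem_singleton]
        constructor
        · rintro ⟨hk', h⟩
          exact hinj k' hk' k hk h
        · rintro rfl
          exact ⟨hk, rfl⟩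
      rw [hfc, hfilter, Finset.sum_singleton, norm_prod,
        ← Real.finset_prod_rpow _ _ (fun j _ => norm_nonneg _) p]
    have hbase : (∑' n : ℤ, ‖fourierCoefP P n‖ ^ p)
        = ∏ j : Fin N, ∑ k ∈ Finset.Icc (-(d j : ℤ)) (d j), ‖c j k‖ ^ p := by
      rw [tsum_eq_sum hvanish, Finset.sum_image hinj, Finset.sum_congr rfl hterm, hS]
      exact (Finset.prod_univ_sum (fun j => Finset.Icc (-(d j : ℤ)) (d j))
        (fun j k => ‖c j k‖ ^ p)).symm
    rw [hbase, ← Real.finset_prod_rpow _ _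
      (fun j _ => Finset.sum_nonneg fun k _ => Real.rpow_nonneg (norm_nonneg _) p) (1/p)]
end

section
/- Let a, h be positive reals with 2h < a < 1/2 − 2h. Then there exists a nonnegative function φ ∈ A(T) (continuous with absolutely convergent Fourier series) such that: (i) φ̂(0) = 1 and φ̂(n) ≥ 0 for all n ∈ Z; (ii) φ vanishes identically on [−a−h, −a+h] ∪ [a−h, a+h]; (iii) ‖φ − 1‖_{A^p(T)} ≤ 12·h^{(p−1)/p} for every p ≥ 1. -/
open MeasureTheory

open Complex intervalIntegral Real

namespace Stmt12Aux

noncomputable def ker (n : ℤ) (t : ℝ) : ℂ :=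
  Complex.exp ((-2) * (Real.pi : ℂ) * Complex.I * (n : ℂ) * (t : ℂ))

lemma ker_continuous (n : ℤ) : Continuous (ker n) :=
  Complex.continuous_exp.comp (continuous_const.mul Complex.continuous_ofReal)

noncomputable def Dc (w : ℝ) (n : ℤ) : ℝ :=
  if n = 0 then w else Real.sin (Real.pi * n * w) ^ 2 / (Real.pi ^ 2 * n ^ 2 * w)

lemma b_ne (n : ℤ) (hn : n ≠ 0) : ((-2) * (Real.pi : ℂ) * Complex.I * (n : ℂ)) ≠ 0 := by
  apply mul_ne_zero (mul_ne_zero (mul_ne_zero (by norm_num)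
    (Complex.ofReal_ne_zero.2 Real.pi_ne_zero)) Complex.I_ne_zero)
  exact_mod_cast Int.cast_ne_zero.2 hn

lemma exp_deriv (b : ℂ) (z : ℂ) :
    HasDerivAt (fun z : ℂ => Complex.exp (b * z)) (b * Complex.exp (b * z)) z := by
  have h1 : HasDerivAt (fun z : ℂ => b * z) b z := by
    simpa using (hasDerivAt_id z).const_mul b
  exact ((Complex.hasDerivAt_exp (b * z)).comp z h1).congr_deriv (mul_comm _ _)

lemma right_deriv (b : ℂ) (hb : b ≠ 0) (w : ℝ) (hw : 0 < w) (z : ℂ) :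
    HasDerivAt (fun z : ℂ => (1 - z/(w:ℂ)) * Complex.exp (b*z)/b + Complex.exp (b*z)/(b^2*(w:ℂ)))
      ((1 - z/(w:ℂ)) * Complex.exp (b*z)) z := by
  have hwC : (w:ℂ) ≠ 0 := Complex.ofReal_ne_zero.2 hw.ne'
  have e := exp_deriv b z
  have d1 : HasDerivAt (fun z : ℂ => 1 - z/(w:ℂ)) (-(1/(w:ℂ))) z := by
    simpa using ((hasDerivAt_id z).div_const (w:ℂ)).const_sub 1
  have := (((d1.mul e).div_const b).add (e.div_const (b^2*(w:ℂ))))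
  refine this.congr_deriv ?_
  field_simp
  ring

lemma left_deriv (b : ℂ) (hb : b ≠ 0) (w : ℝ) (hw : 0 < w) (z : ℂ) :
    HasDerivAt (fun z : ℂ => (1 + z/(w:ℂ)) * Complex.exp (b*z)/b - Complex.exp (b*z)/(b^2*(w:ℂ)))
      ((1 + z/(w:ℂ)) * Complex.exp (b*z)) z := by
  have hwC : (w:ℂ) ≠ 0 := Complex.ofReal_ne_zero.2 hw.ne'
  have e := exp_deriv b z
  have d1 : HasDerivAt (fun z : ℂ => 1 + z/(w:ℂ)) (1/(w:ℂ)) z := by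
    simpa using ((hasDerivAt_id z).div_const (w:ℂ)).const_add 1
  have := (((d1.mul e).div_const b).sub (e.div_const (b^2*(w:ℂ))))
  refine this.congr_deriv ?_
  field_simp
  ring

lemma cos_id (nn w : ℝ) :
    (2 * Real.cos (2*π*nn*w) - 2) / (-(4*π^2*nn^2*w)) = Real.sin (π*nn*w)^2/(π^2*nn^2*w) := by
  have h2 : Real.cos (2*π*nn*w) = 2 * Real.cos (π*nn*w)^2 - 1 := by
    rw [show 2*π*nn*w = 2*(π*nn*w) by ring]; exact Real.cos_two_mul _
  have h3 := Real.sin_sq_add_cos_sq (π*nn*w)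
  rw [h2]
  rcases eq_or_ne (π^2*nn^2*w) 0 with hz | hz
  · rw [show -(4*π^2*nn^2*w) = -4*(π^2*nn^2*w) by ring, hz, mul_zero, div_zero, div_zero]
  · have hz2 : -(4*π^2*nn^2*w) ≠ 0 := by
      intro hc; apply hz; nlinarith [hc]
    rw [div_eq_div_iff hz2 hz]
    linear_combination (4*(π^2*nn^2*w)) * h3

lemma exp_sum (θ : ℝ) :
    Complex.exp ((θ:ℂ) * Complex.I) + Complex.exp (-((θ:ℂ) * Complex.I))
      = ((2 * Real.cos θ : ℝ) : ℂ) := by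
  have : -((θ:ℂ) * Complex.I) = ((-θ : ℝ):ℂ) * Complex.I := by push_cast; ring
  rw [this, Complex.exp_mul_I, Complex.exp_mul_I, ← Complex.ofReal_cos, ← Complex.ofReal_sin,
    ← Complex.ofReal_cos, ← Complex.ofReal_sin, Real.cos_neg, Real.sin_neg]
  push_cast
  ring

lemma tri_cont (w : ℝ) : Continuous (fun t : ℝ => ((max 0 (1 - |t|/w) : ℝ) : ℂ)) :=
  Complex.continuous_ofReal.comp (continuous_const.max
    (continuous_const.sub (continuous_abs.div_const w)))

lemma integral_main (w : ℝ) (hw : 0 < w) (n : ℤ) (hn : n ≠ 0) :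
    ∫ t in (-w : ℝ)..w, ((max 0 (1 - |t|/w) : ℝ) : ℂ) * ker n t = ((Dc w n : ℝ) : ℂ) := by
  set b : ℂ := (-2) * (Real.pi : ℂ) * Complex.I * (n : ℂ) with hbdef
  have hb : b ≠ 0 := b_ne n hn
  have hwC : (w:ℂ) ≠ 0 := Complex.ofReal_ne_zero.2 hw.ne'
  have hker : ∀ t : ℝ, ker n t = Complex.exp (b * (t:ℂ)) := fun t => rfl
  have hcont : Continuous (fun t : ℝ => ((max 0 (1 - |t|/w) : ℝ) : ℂ) * ker n t) :=
    (tri_cont w).mul (ker_continuous n)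
  have hii : ∀ u v : ℝ, IntervalIntegrable
      (fun t : ℝ => ((max 0 (1 - |t|/w) : ℝ) : ℂ) * ker n t) volume u v :=
    fun u v => hcont.intervalIntegrable u v
  rw [← integral_add_adjacent_intervals (b := (0:ℝ)) (hii _ _) (hii _ _)]
  -- right part
  have hr : (∫ t in (0:ℝ)..w, ((max 0 (1 - |t|/w) : ℝ) : ℂ) * ker n t)
      = ∫ t in (0:ℝ)..w, (1 - (t:ℂ)/(w:ℂ)) * Complex.exp (b * (t:ℂ)) := by
    apply integral_congr
    intro t ht
    rw [Set.uIcc_of_le hw.le] at ht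
    obtain ⟨ht0, htw⟩ := ht
    dsimp only
    rw [hker, _root_.abs_of_nonneg ht0, max_eq_right (by
      rw [sub_nonneg, div_le_one hw]; exact htw)]
    push_cast
    ring
  have hrval : (∫ t in (0:ℝ)..w, (1 - (t:ℂ)/(w:ℂ)) * Complex.exp (b * (t:ℂ)))
      = (Complex.exp (b*(w:ℂ))/(b^2*(w:ℂ))) - (1/b + 1/(b^2*(w:ℂ))) := by
    rw [integral_eq_sub_of_hasDerivAt
      (f := fun t : ℝ => (1 - (t:ℂ)/(w:ℂ)) * Complex.exp (b*(t:ℂ))/b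
        + Complex.exp (b*(t:ℂ))/(b^2*(w:ℂ)))
      (fun t _ => (right_deriv b hb w hw (t:ℂ)).comp_ofReal)
      (((continuous_const.sub (Complex.continuous_ofReal.div_const _)).mul
        (Complex.continuous_exp.comp (continuous_const.mul Complex.continuous_ofReal))).intervalIntegrable _ _)]
    rw [Complex.ofReal_zero, mul_zero, Complex.exp_zero, div_self hwC]
    ring
  -- left part
  have hl : (∫ t in (-w:ℝ)..0, ((max 0 (1 - |t|/w) : ℝ) : ℂ) * ker n t)
      = ∫ t in (-w:ℝ)..0, (1 + (t:ℂ)/(w:ℂ)) * Complex.exp (b * (t:ℂ)) := by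
    apply integral_congr
    intro t ht
    rw [Set.uIcc_of_le (by linarith)] at ht
    obtain ⟨ht0, htw⟩ := ht
    dsimp only
    rw [hker, _root_.abs_of_nonpos htw, max_eq_right (by
      rw [sub_nonneg, div_le_one hw]; linarith)]
    push_cast
    ring
  have hlval : (∫ t in (-w:ℝ)..0, (1 + (t:ℂ)/(w:ℂ)) * Complex.exp (b * (t:ℂ)))
      = (1/b - 1/(b^2*(w:ℂ))) - (-(Complex.exp (-(b*(w:ℂ)))/(b^2*(w:ℂ)))) := by
    rw [integral_eq_sub_of_hasDerivAt
      (f := fun t : ℝ => (1 + (t:ℂ)/(w:ℂ)) * Complex.exp (b*(t:ℂ))/b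
        - Complex.exp (b*(t:ℂ))/(b^2*(w:ℂ)))
      (fun t _ => (left_deriv b hb w hw (t:ℂ)).comp_ofReal)
      (((continuous_const.add (Complex.continuous_ofReal.div_const _)).mul
        (Complex.continuous_exp.comp (continuous_const.mul Complex.continuous_ofReal))).intervalIntegrable _ _)]
    rw [Complex.ofReal_zero, mul_zero, Complex.exp_zero, Complex.ofReal_neg]
    rw [show b * -(w:ℂ) = -(b*(w:ℂ)) by ring]
    rw [show ((1:ℂ) + -(w:ℂ)/(w:ℂ)) = 0 by rw [neg_div, div_self hwC]; ring]
    ring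
  rw [hl, hlval, hr, hrval]
  -- combine
  have harg : b * (w:ℂ) = ((-(2*π*n*w) : ℝ) : ℂ) * Complex.I := by
    rw [hbdef]; push_cast; ring
  have hEE : Complex.exp (b*(w:ℂ)) + Complex.exp (-(b*(w:ℂ)))
      = ((2 * Real.cos (2*π*n*w) : ℝ) : ℂ) := by
    rw [harg, exp_sum, Real.cos_neg]
  have hb2 : b^2 * (w:ℂ) = ((-(4*π^2*(n:ℝ)^2*w) : ℝ) : ℂ) := by
    rw [hbdef]
    push_cast
    ring_nf
    rw [Complex.I_sq]
    ring
  have key : ((1/b - 1/(b^2*(w:ℂ))) - (-(Complex.exp (-(b*(w:ℂ)))/(b^2*(w:ℂ)))))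
      + ((Complex.exp (b*(w:ℂ))/(b^2*(w:ℂ))) - (1/b + 1/(b^2*(w:ℂ))))
      = (Complex.exp (b*(w:ℂ)) + Complex.exp (-(b*(w:ℂ))) - 2)/(b^2*(w:ℂ)) := by
    have hb2ne : b^2*(w:ℂ) ≠ 0 := mul_ne_zero (pow_ne_zero 2 hb) hwC
    field_simp
    ring
  rw [key, hEE, hb2]
  rw [show ((2 * Real.cos (2*π*n*w) : ℝ) : ℂ) - 2 = ((2 * Real.cos (2*π*n*w) - 2 : ℝ) : ℂ) by
    push_cast; ring]
  rw [← Complex.ofReal_div]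
  congr 1
  rw [Dc, if_neg hn]
  exact cos_id (n:ℝ) w

end Stmt12Aux

namespace Part2
open Stmt12Aux

lemma integral_main0 (w : ℝ) (hw : 0 < w) :
    ∫ t in (-w : ℝ)..w, ((max 0 (1 - |t|/w) : ℝ) : ℂ) * ker 0 t = ((w : ℝ) : ℂ) := by
  have hker : ∀ t : ℝ, ker (0:ℤ) t = 1 := by
    intro t; unfold ker; push_cast; simp
  have hwC : (w:ℂ) ≠ 0 := Complex.ofReal_ne_zero.2 hw.ne'
  have hii : ∀ u v : ℝ, IntervalIntegrable
      (fun t : ℝ => ((max 0 (1 - |t|/w) : ℝ) : ℂ) * ker 0 t) volume u v :=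
    fun u v => ((tri_cont w).mul (ker_continuous 0)).intervalIntegrable u v
  rw [← integral_add_adjacent_intervals (b := (0:ℝ)) (hii _ _) (hii _ _)]
  have hr : (∫ t in (0:ℝ)..w, ((max 0 (1 - |t|/w) : ℝ) : ℂ) * ker 0 t)
      = ∫ t in (0:ℝ)..w, (1 - (t:ℂ)/(w:ℂ)) := by
    apply integral_congr
    intro t ht
    rw [Set.uIcc_of_le hw.le] at ht
    obtain ⟨ht0, htw⟩ := ht
    dsimp only
    rw [hker, _root_.abs_of_nonneg ht0, max_eq_right (by
      rw [sub_nonneg, div_le_one hw]; exact htw)]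
    push_cast; ring
  have hl : (∫ t in (-w:ℝ)..0, ((max 0 (1 - |t|/w) : ℝ) : ℂ) * ker 0 t)
      = ∫ t in (-w:ℝ)..0, (1 + (t:ℂ)/(w:ℂ)) := by
    apply integral_congr
    intro t ht
    rw [Set.uIcc_of_le (by linarith)] at ht
    obtain ⟨ht0, htw⟩ := ht
    dsimp only
    rw [hker, _root_.abs_of_nonpos htw, max_eq_right (by
      rw [sub_nonneg, div_le_one hw]; linarith)]
    push_cast; ring
  have hrval : (∫ t in (0:ℝ)..w, (1 - (t:ℂ)/(w:ℂ)))
      = ((w:ℂ) - (w:ℂ)^2/(2*(w:ℂ))) - 0 := by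
    rw [integral_eq_sub_of_hasDerivAt
      (f := fun t : ℝ => (t:ℂ) - (t:ℂ)^2/(2*(w:ℂ))) (f' := fun t : ℝ => 1 - (t:ℂ)/(w:ℂ))
      (fun t _ => by
        have : HasDerivAt (fun z : ℂ => z - z^2/(2*(w:ℂ))) (1 - (t:ℂ)/(w:ℂ)) (t:ℂ) := by
          have := (hasDerivAt_id ((t:ℝ):ℂ)).sub ((hasDerivAt_pow 2 ((t:ℝ):ℂ)).div_const (2*(w:ℂ)))
          refine this.congr_deriv ?_
          field_simp
          ring
        exact this.comp_ofReal)
      ((continuous_const.sub (Complex.continuous_ofReal.div_const _)).intervalIntegrable _ _)]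
    norm_num
  have hlval : (∫ t in (-w:ℝ)..0, (1 + (t:ℂ)/(w:ℂ)))
      = (0 : ℂ) - ((-(w:ℂ)) + (-(w:ℂ))^2/(2*(w:ℂ))) := by
    rw [integral_eq_sub_of_hasDerivAt
      (f := fun t : ℝ => (t:ℂ) + (t:ℂ)^2/(2*(w:ℂ))) (f' := fun t : ℝ => 1 + (t:ℂ)/(w:ℂ))
      (fun t _ => by
        have : HasDerivAt (fun z : ℂ => z + z^2/(2*(w:ℂ))) (1 + (t:ℂ)/(w:ℂ)) (t:ℂ) := by
          have := (hasDerivAt_id ((t:ℝ):ℂ)).add ((hasDerivAt_pow 2 ((t:ℝ):ℂ)).div_const (2*(w:ℂ)))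
          refine this.congr_deriv ?_
          field_simp
          ring
        exact this.comp_ofReal)
      ((continuous_const.add (Complex.continuous_ofReal.div_const _)).intervalIntegrable _ _)]
    push_cast
    norm_num
  rw [hl, hlval, hr, hrval]
  field_simp
  ring

end Part2

namespace Part3
open Stmt12Aux Part2

lemma ker_periodic (n : ℤ) : Function.Periodic (ker n) 1 := by
  intro t
  unfold ker
  push_cast
  rw [mul_add, Complex.exp_add, mul_one]
  have h1 : Complex.exp ((-2) * (Real.pi : ℂ) * Complex.I * (n : ℂ)) = 1 := by
    have := Complex.exp_int_mul_two_pi_mul_I (-n)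
    rw [← this]
    congr 1
    push_cast
    ring
  rw [h1, mul_one]

noncomputable def nrm (t : ℝ) : ℝ := ‖((t : ℝ) : AddCircle (1:ℝ))‖

noncomputable def tri (w t : ℝ) : ℝ := max 0 (1 - nrm t / w)

noncomputable def fourierCoefP' (f : ℝ → ℂ) (n : ℤ) : ℂ := ∫ t in (0:ℝ)..1, f t * ker n t

lemma nrm_nonneg (t : ℝ) : 0 ≤ nrm t := norm_nonneg _

lemma nrm_continuous : Continuous nrm :=
  continuous_norm.comp (AddCircle.continuous_mk' (1:ℝ))

lemma nrm_periodic : Function.Periodic nrm 1 := by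
  intro t; unfold nrm; rw [AddCircle.coe_add_period]

lemma nrm_neg (t : ℝ) : nrm (-t) = nrm t := by
  unfold nrm
  have : ((-t : ℝ) : AddCircle (1:ℝ)) = -((t:ℝ) : AddCircle (1:ℝ)) := by
    exact AddCircle.coe_neg (p := (1:ℝ))
  rw [this, norm_neg]

lemma nrm_eq_abs {t : ℝ} (ht : |t| ≤ 1/2) : nrm t = |t| := by
  unfold nrm
  exact (AddCircle.norm_coe_eq_abs_iff (1:ℝ) one_ne_zero).2 (by rwa [abs_one])

lemma nrm_eq_min {t : ℝ} (h0 : 0 ≤ t) (h1 : t < 1) : nrm t = min t (1 - t) := by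
  unfold nrm
  rw [AddCircle.norm_eq (p := (1:ℝ))]
  simp only [inv_one, one_mul, mul_one]
  rw [abs_sub_round_eq_min, Int.fract_eq_self.2 ⟨h0, h1⟩]

lemma nrm_triangle (x y : ℝ) : nrm (x - y) ≤ nrm x + nrm y := by
  unfold nrm
  have : ((x - y : ℝ) : AddCircle (1:ℝ)) = ((x:ℝ) : AddCircle (1:ℝ)) - ((y:ℝ) : AddCircle (1:ℝ)) :=
    AddCircle.coe_sub _ _ _
  rw [this]
  exact norm_sub_le _ _

lemma tri_nonneg (w t : ℝ) : 0 ≤ tri w t := le_max_left _ _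

lemma tri_le_one (w t : ℝ) (hw : 0 < w) : tri w t ≤ 1 := by
  unfold tri
  rw [max_le_iff]
  refine ⟨by norm_num, ?_⟩
  have : 0 ≤ nrm t / w := div_nonneg (nrm_nonneg t) hw.le
  linarith

lemma tri_continuous (w : ℝ) : Continuous (tri w) :=
  continuous_const.max (continuous_const.sub (nrm_continuous.div_const w))

lemma tri_periodic (w : ℝ) : Function.Periodic (tri w) 1 := by
  intro t; unfold tri; rw [nrm_periodic t]

lemma tri_eq_zero {w t : ℝ} (hw : 0 < w) (h : w ≤ nrm t) : tri w t = 0 := by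
  unfold tri
  rw [max_eq_left]
  rw [sub_nonpos, le_div_iff₀ hw, one_mul]
  exact h

lemma tri_eq {w t : ℝ} (hw : 0 < w) (h : nrm t ≤ w) : tri w t = 1 - nrm t / w := by
  unfold tri
  rw [max_eq_right]
  rw [sub_nonneg, div_le_one hw]
  exact h

lemma coef_tri (w : ℝ) (hw : 0 < w) (hw2 : w ≤ 1/2) (n : ℤ) :
    fourierCoefP' (fun t => ((tri w t : ℝ) : ℂ)) n = ((Dc w n : ℝ) : ℂ) := by
  have hP : Function.Periodic (fun t : ℝ => ((tri w t : ℝ) : ℂ) * ker n t) 1 := by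
    intro t
    simp only [tri_periodic w t, ker_periodic n t]
  have hshift := hP.intervalIntegral_add_eq 0 (-(1/2))
  rw [zero_add] at hshift
  rw [show -(1/2) + (1:ℝ) = 1/2 by norm_num] at hshift
  unfold fourierCoefP'
  rw [hshift]
  have hcont : Continuous (fun t : ℝ => ((max 0 (1 - |t|/w) : ℝ) : ℂ) * ker n t) :=
    (tri_cont w).mul (ker_continuous n)
  have hii : ∀ u v : ℝ, IntervalIntegrable
      (fun t : ℝ => ((max 0 (1 - |t|/w) : ℝ) : ℂ) * ker n t) volume u v :=
    fun u v => hcont.intervalIntegrable u v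
  have hcg : (∫ t in (-(1/2):ℝ)..(1/2), ((tri w t : ℝ) : ℂ) * ker n t)
      = ∫ t in (-(1/2):ℝ)..(1/2), ((max 0 (1 - |t|/w) : ℝ) : ℂ) * ker n t := by
    apply integral_congr
    intro t ht
    rw [Set.uIcc_of_le (by norm_num)] at ht
    obtain ⟨ht1, ht2⟩ := ht
    dsimp only
    congr 2
    unfold tri
    rw [nrm_eq_abs (abs_le.2 ⟨by linarith, by linarith⟩)]
  rw [hcg]
  have hsplit : (∫ t in (-(1/2):ℝ)..(1/2), ((max 0 (1 - |t|/w) : ℝ) : ℂ) * ker n t)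
      = (∫ t in (-(1/2):ℝ)..(-w), ((max 0 (1 - |t|/w) : ℝ) : ℂ) * ker n t)
      + (∫ t in (-w:ℝ)..w, ((max 0 (1 - |t|/w) : ℝ) : ℂ) * ker n t)
      + (∫ t in (w:ℝ)..(1/2), ((max 0 (1 - |t|/w) : ℝ) : ℂ) * ker n t) := by
    rw [integral_add_adjacent_intervals (hii _ _) (hii _ _),
      integral_add_adjacent_intervals (hii _ _) (hii _ _)]
  have hzero : ∀ u v : ℝ, (∀ t ∈ Set.uIcc u v, w ≤ |t|) →
      (∫ t in u..v, ((max 0 (1 - |t|/w) : ℝ) : ℂ) * ker n t) = 0 := by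
    intro u v huv
    rw [show (0:ℂ) = ∫ t in u..v, (0:ℂ) by simp]
    apply integral_congr
    intro t ht
    dsimp only
    rw [max_eq_left (by
      rw [sub_nonpos, le_div_iff₀ hw, one_mul]; exact huv t ht)]
    simp
  have hz1 : (∫ t in (-(1/2):ℝ)..(-w), ((max 0 (1 - |t|/w) : ℝ) : ℂ) * ker n t) = 0 := by
    apply hzero
    intro t ht
    rw [Set.uIcc_of_le (by linarith)] at ht
    rw [_root_.abs_of_nonpos (by linarith [ht.2])]
    linarith [ht.2]
  have hz2 : (∫ t in (w:ℝ)..(1/2), ((max 0 (1 - |t|/w) : ℝ) : ℂ) * ker n t) = 0 := by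
    apply hzero
    intro t ht
    rw [Set.uIcc_of_le (by linarith)] at ht
    rw [_root_.abs_of_nonneg (by linarith [ht.1])]
    linarith [ht.1]
  rw [hsplit, hz1, hz2]
  rcases eq_or_ne n 0 with rfl | hn
  · rw [integral_main0 w hw, Dc, if_pos rfl]
    ring
  · rw [integral_main w hw n hn]
    ring

end Part3

namespace Part4
open Stmt12Aux Part2 Part3

lemma coefP_sub (f g : ℝ → ℂ) (hf : Continuous f) (hg : Continuous g) (n : ℤ) :
    fourierCoefP' (fun t => f t - g t) n = fourierCoefP' f n - fourierCoefP' g n := by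
  unfold fourierCoefP'
  rw [← integral_sub (f := fun t => f t * ker n t) (g := fun t => g t * ker n t) ((hf.mul (ker_continuous n)).intervalIntegrable _ _)
    ((hg.mul (ker_continuous n)).intervalIntegrable _ _)]
  apply integral_congr
  intro t _
  dsimp only
  ring

lemma coefP_add (f g : ℝ → ℂ) (hf : Continuous f) (hg : Continuous g) (n : ℤ) :
    fourierCoefP' (fun t => f t + g t) n = fourierCoefP' f n + fourierCoefP' g n := by
  unfold fourierCoefP'
  rw [← integral_add (f := fun t => f t * ker n t) (g := fun t => g t * ker n t) ((hf.mul (ker_continuous n)).intervalIntegrable _ _)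
    ((hg.mul (ker_continuous n)).intervalIntegrable _ _)]
  apply integral_congr
  intro t _
  dsimp only
  ring

lemma coefP_const_mul (c : ℂ) (f : ℝ → ℂ) (n : ℤ) :
    fourierCoefP' (fun t => c * f t) n = c * fourierCoefP' f n := by
  unfold fourierCoefP'
  rw [← intervalIntegral.integral_const_mul]
  apply integral_congr
  intro t _
  dsimp only
  ring

lemma coef_one (n : ℤ) : fourierCoefP' (fun _ => (1:ℂ)) n = if n = 0 then 1 else 0 := by
  unfold fourierCoefP'
  rcases eq_or_ne n 0 with rfl | hn
  · simp only [if_pos]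
    have : ∀ t : ℝ, (1:ℂ) * ker 0 t = 1 := by
      intro t; unfold ker; push_cast; simp
    rw [integral_congr (fun t _ => this t)]
    simp
  · rw [if_neg hn]
    set b : ℂ := (-2) * (Real.pi : ℂ) * Complex.I * (n : ℂ) with hbdef
    have hb : b ≠ 0 := b_ne n hn
    have h1 : (∫ t in (0:ℝ)..1, (1:ℂ) * ker n t)
        = ∫ t in (0:ℝ)..1, Complex.exp (b * (t:ℂ)) := by
      apply integral_congr
      intro t _
      dsimp only
      rw [one_mul]
      rfl
    have key : (∫ t in (0:ℝ)..1, Complex.exp (b * (t:ℂ)))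
        = Complex.exp (b*((1:ℝ):ℂ))/b - Complex.exp (b*((0:ℝ):ℂ))/b := by
      apply integral_eq_sub_of_hasDerivAt (f := fun t : ℝ => Complex.exp (b*(t:ℂ))/b)
      · intro t _
        have := (exp_deriv b ((t:ℝ):ℂ)).div_const b
        have h2 : b * Complex.exp (b*((t:ℝ):ℂ))/b = Complex.exp (b*((t:ℝ):ℂ)) := by
          field_simp
        rw [h2] at this
        exact this.comp_ofReal
      · exact (Complex.continuous_exp.comp
          (continuous_const.mul Complex.continuous_ofReal)).intervalIntegrable _ _
    rw [h1, key]
    have h3 : b * ((1:ℝ):ℂ) = ((-n : ℤ):ℂ) * (2*(Real.pi:ℂ)*Complex.I) := by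
      rw [hbdef]; push_cast; ring
    rw [h3, Complex.exp_int_mul_two_pi_mul_I]
    simp

lemma coef_shift (f : ℝ → ℂ) (hf : Continuous f) (hp : Function.Periodic f 1) (s : ℝ) (n : ℤ) :
    fourierCoefP' (fun t => f (t - s)) n = ker n s * fourierCoefP' f n := by
  unfold fourierCoefP'
  have hker : ∀ u v : ℝ, ker n (u + v) = ker n u * ker n v := by
    intro u v; unfold ker; push_cast; rw [mul_add, Complex.exp_add]
  have h1 : (∫ t in (0:ℝ)..1, f (t - s) * ker n t)
      = ∫ t in (0:ℝ)..1, ker n s * (f (t - s) * ker n (t - s)) := by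
    apply integral_congr
    intro t _
    dsimp only
    rw [show t = (t - s) + s by ring, hker]
    ring_nf
  rw [h1, intervalIntegral.integral_const_mul]
  congr 1
  have h2 := intervalIntegral.integral_comp_sub_right (fun u => f u * ker n u) s (a := (0:ℝ)) (b := 1)
  rw [h2]
  have hper : Function.Periodic (fun u : ℝ => f u * ker n u) 1 := by
    intro t; simp only [hp t, ker_periodic n t]
  have h3 := hper.intervalIntegral_add_eq (0 - s) 0
  rw [zero_add] at h3
  rw [show (1:ℝ) - s = 0 - s + 1 by ring]
  exact h3

end Part4

namespace Part5
open Stmt12Aux Part2 Part3 Part4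

noncomputable def phi (a h t : ℝ) : ℝ :=
  1 + 6 * tri h t - (2 * tri (2*h) (t - a) - tri h (t - a))
    - (2 * tri (2*h) (t + a) - tri h (t + a))

noncomputable def cc (a h : ℝ) (n : ℤ) : ℝ :=
  6 * Dc h n - 2 * Real.cos (2*π*n*a) * (2 * Dc (2*h) n - Dc h n)

noncomputable def trapC (h : ℝ) : ℝ → ℂ := fun u => 2 * ((tri (2*h) u : ℝ) : ℂ) - ((tri h u : ℝ) : ℂ)

lemma trapC_continuous (h : ℝ) : Continuous (trapC h) :=
  (continuous_const.mul (Complex.continuous_ofReal.comp (tri_continuous (2*h)))).sub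
    (Complex.continuous_ofReal.comp (tri_continuous h))

lemma trapC_periodic (h : ℝ) : Function.Periodic (trapC h) 1 := by
  intro t; unfold trapC; rw [tri_periodic, tri_periodic]

lemma ker_add_neg (n : ℤ) (s : ℝ) :
    ker n s + ker n (-s) = ((2 * Real.cos (2*π*n*s) : ℝ) : ℂ) := by
  have h1 : ((-2) * (Real.pi : ℂ) * Complex.I * (n : ℂ) * ((s:ℝ):ℂ))
      = ((-(2*π*n*s) : ℝ) : ℂ) * Complex.I := by push_cast; ring
  have h2 : ((-2) * (Real.pi : ℂ) * Complex.I * (n : ℂ) * ((-s:ℝ):ℂ))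
      = -(((-(2*π*n*s) : ℝ) : ℂ) * Complex.I) := by push_cast; ring
  unfold ker
  rw [h1, h2, Stmt12Aux.exp_sum, Real.cos_neg]

lemma coef_phi (a h : ℝ) (hh : 0 < h) (hh2 : 2*h ≤ 1/2) (n : ℤ) :
    fourierCoefP' (fun t => ((phi a h t : ℝ) : ℂ)) n
      = (((if n = 0 then (1:ℝ) else 0) + cc a h n : ℝ) : ℂ) := by
  have hfun : (fun t : ℝ => ((phi a h t : ℝ) : ℂ))
      = fun t => ((fun t : ℝ => (1:ℂ) + 6 * ((tri h t : ℝ):ℂ)) t - trapC h (t - a)) - trapC h (t - (-a)) := by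
    funext t
    unfold phi trapC
    rw [sub_neg_eq_add]
    push_cast
    ring
  rw [hfun]
  have hc1 : Continuous (fun t : ℝ => (1:ℂ) + 6 * ((tri h t : ℝ):ℂ)) :=
    continuous_const.add (continuous_const.mul (Complex.continuous_ofReal.comp (tri_continuous h)))
  have hc2 : Continuous (fun t : ℝ => trapC h (t - a)) :=
    (trapC_continuous h).comp (continuous_sub_right a)
  have e1 := coefP_sub
    (fun t : ℝ => ((fun t : ℝ => (1:ℂ) + 6 * ((tri h t : ℝ):ℂ)) t - trapC h (t - a)))
    (fun t : ℝ => trapC h (t - (-a)))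
    (hc1.sub hc2) ((trapC_continuous h).comp (continuous_sub_right (-a))) n
  rw [e1]
  have e2 := coefP_sub (fun t : ℝ => (1:ℂ) + 6 * ((tri h t : ℝ):ℂ))
    (fun t : ℝ => trapC h (t - a)) hc1 hc2 n
  rw [e2]
  have e3 := coefP_add (fun _ : ℝ => (1:ℂ)) (fun t : ℝ => 6 * ((tri h t : ℝ):ℂ))
    continuous_const (continuous_const.mul (Complex.continuous_ofReal.comp (tri_continuous h))) n
  rw [e3]
  have e4 := coefP_const_mul 6 (fun t : ℝ => ((tri h t : ℝ):ℂ)) n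
  rw [e4]
  have e5 := coef_shift (trapC h) (trapC_continuous h) (trapC_periodic h) a n
  have e6 := coef_shift (trapC h) (trapC_continuous h) (trapC_periodic h) (-a) n
  rw [e5, e6]
  have e7 : fourierCoefP' (trapC h) n = ((2 * Dc (2*h) n - Dc h n : ℝ) : ℂ) := by
    unfold trapC
    have := coefP_sub (fun u : ℝ => 2 * ((tri (2*h) u : ℝ) : ℂ)) (fun u : ℝ => ((tri h u : ℝ) : ℂ))
      (continuous_const.mul (Complex.continuous_ofReal.comp (tri_continuous (2*h))))
      (Complex.continuous_ofReal.comp (tri_continuous h)) n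
    rw [this, coefP_const_mul, coef_tri (2*h) (by linarith) (by linarith) n,
      coef_tri h hh (by linarith) n]
    push_cast
    ring
  rw [e7, coef_one, coef_tri h hh (by linarith) n]
  rw [sub_sub, ← add_mul, ker_add_neg]
  unfold cc
  rcases eq_or_ne n 0 with rfl | hn
  · rw [if_pos rfl, if_pos rfl]
    push_cast
    ring
  · rw [if_neg hn, if_neg hn]
    push_cast
    ring

end Part5

namespace Part6
open Stmt12Aux Part2 Part3 Part4 Part5

lemma Dc_nonneg {w : ℝ} (hw : 0 < w) (n : ℤ) : 0 ≤ Dc w n := by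
  unfold Dc
  rcases eq_or_ne n 0 with rfl | hn
  · rw [if_pos rfl]; exact hw.le
  · rw [if_neg hn]
    apply div_nonneg (sq_nonneg _)
    have : ((n:ℝ))^2 > 0 := by positivity
    positivity

lemma nsq_pos {n : ℤ} (hn : n ≠ 0) : (0:ℝ) < (n:ℝ)^2 := by
  have : (n:ℝ) ≠ 0 := Int.cast_ne_zero.2 hn
  positivity

lemma Dc_le {w : ℝ} (hw : 0 < w) (n : ℤ) : Dc w n ≤ w := by
  unfold Dc
  rcases eq_or_ne n 0 with rfl | hn
  · rw [if_pos rfl]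
  · rw [if_neg hn]
    have hd : (0:ℝ) < π^2 * (n:ℝ)^2 * w := by
      have := nsq_pos hn
      have := Real.pi_pos
      positivity
    rw [div_le_iff₀ hd]
    calc Real.sin (π*n*w)^2 ≤ (π*n*w)^2 := Real.sin_sq_le_sq
      _ = w * (π^2*(n:ℝ)^2*w) := by ring

lemma Dc_bound {w : ℝ} (hw : 0 < w) {n : ℤ} (hn : n ≠ 0) :
    Dc w n ≤ 1/(π^2*w) * (1/(n:ℝ)^2) := by
  unfold Dc
  rw [if_neg hn]
  have hd : (0:ℝ) < π^2 * (n:ℝ)^2 * w := by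
    have := nsq_pos hn
    have := Real.pi_pos
    positivity
  rw [div_le_iff₀ hd]
  have h1 : Real.sin (π*n*w)^2 ≤ 1 := Real.sin_sq_le_one _
  calc Real.sin (π*n*w)^2 ≤ 1 := h1
    _ = (1/(π^2*w) * (1/(n:ℝ)^2)) * (π^2*(n:ℝ)^2*w) := by
        field_simp

lemma Dc_double {h : ℝ} (hh : 0 < h) (n : ℤ) : Dc (2*h) n ≤ 2 * Dc h n := by
  unfold Dc
  rcases eq_or_ne n 0 with rfl | hn
  · rw [if_pos rfl, if_pos rfl]
  · rw [if_neg hn, if_neg hn]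
    have hd1 : (0:ℝ) < π^2 * (n:ℝ)^2 * (2*h) := by
      have := nsq_pos hn; have := Real.pi_pos; positivity
    have hd2 : (0:ℝ) < π^2 * (n:ℝ)^2 * h := by
      have := nsq_pos hn; have := Real.pi_pos; positivity
    rw [div_le_iff₀ hd1]
    have e : 2 * (Real.sin (π*(n:ℝ)*h)^2 / (π^2*(n:ℝ)^2*h)) * (π^2*(n:ℝ)^2*(2*h))
        = 4 * Real.sin (π*(n:ℝ)*h)^2 := by
      field_simp
      ring
    rw [e]
    have hsin : Real.sin (π*(n:ℝ)*(2*h)) = 2 * Real.sin (π*n*h) * Real.cos (π*n*h) := by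
      rw [show π*(n:ℝ)*(2*h) = 2*(π*n*h) by ring, Real.sin_two_mul]
    rw [hsin]
    have hc := Real.sin_sq_add_cos_sq (π*(n:ℝ)*h)
    nlinarith [sq_nonneg (Real.sin (π*(n:ℝ)*h)), sq_nonneg (Real.cos (π*(n:ℝ)*h))]

lemma cc_bounds {a h : ℝ} (hh : 0 < h) (n : ℤ) :
    0 ≤ cc a h n ∧ cc a h n ≤ 12 * Dc h n := by
  have hD : 0 ≤ Dc h n := Dc_nonneg hh n
  have hD2 : 0 ≤ Dc (2*h) n := Dc_nonneg (by linarith) n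
  have hDd : Dc (2*h) n ≤ 2 * Dc h n := Dc_double hh n
  have hc1 : Real.cos (2*π*n*a) ≤ 1 := Real.cos_le_one _
  have hc2 : -1 ≤ Real.cos (2*π*n*a) := Real.neg_one_le_cos _
  set c := Real.cos (2*π*n*a)
  set D := Dc h n
  set X := 2 * Dc (2*h) n - D
  have hX1 : -D ≤ X := by simp only [X]; linarith
  have hX2 : X ≤ 3*D := by simp only [X]; linarith
  constructor
  · have t1 : 0 ≤ (1 - c) * (3*D + X) := mul_nonneg (by linarith) (by linarith)
    have t2 : 0 ≤ (1 + c) * (3*D - X) := mul_nonneg (by linarith) (by linarith)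
    unfold cc
    nlinarith [t1, t2]
  · have t1 : 0 ≤ (1 - c) * (3*D - X) := mul_nonneg (by linarith) (by linarith)
    have t2 : 0 ≤ (1 + c) * (3*D + X) := mul_nonneg (by linarith) (by linarith)
    unfold cc
    nlinarith [t1, t2]

lemma cc_zero (a h : ℝ) : cc a h 0 = 0 := by
  unfold cc Dc
  rw [if_pos rfl, if_pos rfl]
  push_cast
  rw [show 2*π*(0:ℝ)*a = 0 by ring, Real.cos_zero]
  ring

lemma summable_Dc {w : ℝ} (hw : 0 < w) : Summable (Dc w) := by
  have hmaj : Summable (fun n : ℤ => (if n = 0 then w else 0) + (1/(π^2*w)) * (1/(n:ℝ)^2)) := by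
    apply Summable.add
    · exact (hasSum_ite_eq (0:ℤ) w).summable
    · exact (summable_one_div_int_pow.2 (by norm_num)).mul_left _
  apply Summable.of_nonneg_of_le (fun n => Dc_nonneg hw n) _ hmaj
  intro n
  rcases eq_or_ne n 0 with rfl | hn
  · rw [if_pos rfl]
    unfold Dc
    rw [if_pos rfl]
    have : (1/(π^2*w)) * (1/((0:ℤ):ℝ)^2) = 0 := by norm_num
    rw [this, add_zero]
  · rw [if_neg hn, zero_add]
    exact Dc_bound hw hn

end Part6

namespace Part7
open Stmt12Aux Part2 Part3 Part4 Part5 Part6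

lemma hasSum_Dc {w : ℝ} (hw : 0 < w) (hw2 : w ≤ 1/2) : HasSum (Dc w) 1 := by
  haveI : Fact ((0:ℝ) < 1) := ⟨one_pos⟩
  set F : C(AddCircle (1:ℝ), ℂ) :=
    ⟨fun x => ((max 0 (1 - ‖x‖/w) : ℝ) : ℂ),
      Complex.continuous_ofReal.comp (continuous_const.max
        (continuous_const.sub (continuous_norm.div_const w)))⟩ with hF
  have hcoef : ∀ n : ℤ, fourierCoeff (⇑F) n = ((Dc w n : ℝ) : ℂ) := by
    intro n
    rw [fourierCoeff_eq_intervalIntegral (⇑F) n 0]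
    rw [zero_add]
    have : (1/(1:ℝ)) = 1 := by norm_num
    rw [this, one_smul]
    rw [← coef_tri w hw hw2 n]
    unfold fourierCoefP'
    apply integral_congr
    intro t _
    dsimp only
    rw [fourier_coe_apply]
    have hFt : F ((t : ℝ) : AddCircle (1:ℝ)) = ((tri w t : ℝ) : ℂ) := rfl
    rw [hFt, smul_eq_mul, mul_comm]
    congr 1
    unfold ker
    congr 1
    push_cast
    ring
  have hsummable : Summable (fourierCoeff (⇑F)) := by
    apply Summable.congr _ (fun n => (hcoef n).symm)
    exact (Complex.summable_ofReal).2 (summable_Dc hw)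
  have hps := has_pointwise_sum_fourier_series_of_summable hsummable (0 : AddCircle (1:ℝ))
  have hF0 : F (0 : AddCircle (1:ℝ)) = 1 := by
    show ((max 0 (1 - ‖(0 : AddCircle (1:ℝ))‖/w) : ℝ) : ℂ) = 1
    rw [norm_zero, zero_div, sub_zero, max_eq_right zero_le_one, Complex.ofReal_one]
  rw [hF0] at hps
  have heq : (fun i : ℤ => fourierCoeff (⇑F) i • (fourier i) (0 : AddCircle (1:ℝ)))
      = fun n : ℤ => ((Dc w n : ℝ) : ℂ) := by
    funext n
    rw [fourier_eval_zero, smul_eq_mul, mul_one, hcoef]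
  rw [heq, show (1:ℂ) = ((1:ℝ):ℂ) by norm_num] at hps
  exact (Complex.hasSum_ofReal).1 hps
end Part7

namespace Part8
open Stmt12Aux Part2 Part3 Part4 Part5 Part6 Part7

noncomputable def trap (h u : ℝ) : ℝ := 2 * tri (2*h) u - tri h u

lemma phi_eq (a h t : ℝ) : phi a h t = 1 + 6 * tri h t - trap h (t - a) - trap h (t + a) := rfl

lemma trap_one {h u : ℝ} (hh : 0 < h) (hu : nrm u ≤ h) : trap h u = 1 := by
  unfold trap
  rw [tri_eq hh hu, tri_eq (by linarith) (by linarith)]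
  field_simp
  ring

lemma trap_zero {h u : ℝ} (hh : 0 < h) (hu : 2*h ≤ nrm u) : trap h u = 0 := by
  unfold trap
  rw [tri_eq_zero hh (by linarith), tri_eq_zero (by linarith) hu]
  ring

lemma trap_nonneg {h : ℝ} (hh : 0 < h) (u : ℝ) : 0 ≤ trap h u := by
  rcases le_total (nrm u) h with hc | hc
  · rw [trap_one hh hc]; norm_num
  · rcases le_total (2*h) (nrm u) with hc2 | hc2
    · rw [trap_zero hh hc2]
    · unfold trap
      rw [tri_eq_zero hh hc, tri_eq (by linarith) hc2, sub_zero]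
      have : nrm u / (2*h) ≤ 1 := by
        rw [div_le_one (by linarith)]; exact hc2
      linarith

lemma trap_le_one {h : ℝ} (hh : 0 < h) (u : ℝ) : trap h u ≤ 1 := by
  rcases le_total (nrm u) h with hc | hc
  · rw [trap_one hh hc]
  · rcases le_total (2*h) (nrm u) with hc2 | hc2
    · rw [trap_zero hh hc2]; norm_num
    · unfold trap
      rw [tri_eq_zero hh hc, tri_eq (by linarith) hc2, sub_zero]
      have hd2 : (1:ℝ)/2 ≤ nrm u / (2*h) := by
        rw [le_div_iff₀ (by linarith : (0:ℝ) < 2*h)]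
        linarith
      linarith

lemma trap_pos_imp {h u : ℝ} (hh : 0 < h) (hu : 0 < trap h u) : nrm u < 2*h := by
  by_contra hcon
  push_neg at hcon
  rw [trap_zero hh hcon] at hu
  exact lt_irrefl 0 hu

lemma phi_nonneg {a h : ℝ} (hh : 0 < h) (h1 : 2*h < a) (h2 : a < 1/2 - 2*h) (t : ℝ) :
    0 ≤ phi a h t := by
  have key : trap h (t - a) + trap h (t + a) ≤ 1 := by
    have hnot : ¬ (nrm (t - a) < 2*h ∧ nrm (t + a) < 2*h) := by
      rintro ⟨hc1, hc2⟩
      have htri : nrm (2*a) ≤ nrm (t+a) + nrm (t-a) := by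
        rw [show 2*a = (t+a) - (t-a) by ring]
        exact nrm_triangle _ _
      have hmin : nrm (2*a) = min (2*a) (1 - 2*a) := nrm_eq_min (by linarith) (by linarith)
      have h4 : 4*h < nrm (2*a) := by
        rw [hmin, lt_min_iff]
        constructor <;> linarith
      linarith
    rcases le_or_gt (2*h) (nrm (t - a)) with hc | hc
    · rw [trap_zero hh hc, zero_add]
      exact trap_le_one hh _
    · have : ¬ (nrm (t + a) < 2*h) := fun hcc => hnot ⟨hc, hcc⟩
      push_neg at this
      rw [trap_zero hh this, add_zero]
      exact trap_le_one hh _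
  rw [phi_eq]
  have := tri_nonneg h t
  linarith

lemma phi_zero_right {a h : ℝ} (hh : 0 < h) (h1 : 2*h < a) (h2 : a < 1/2 - 2*h)
    {t : ℝ} (ht : t ∈ Set.Icc (a - h) (a + h)) : phi a h t = 0 := by
  obtain ⟨ht1, ht2⟩ := ht
  have hh8 : h < 1/8 := by linarith
  have e1 : tri h t = 0 := by
    apply tri_eq_zero hh
    rw [nrm_eq_min (by linarith) (by linarith)]
    rw [le_min_iff]
    constructor <;> linarith
  have e2 : trap h (t - a) = 1 := by
    apply trap_one hh
    rw [nrm_eq_abs (by rw [abs_le]; constructor <;> linarith)]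
    rw [abs_le]
    constructor <;> linarith
  have e3 : trap h (t + a) = 0 := by
    apply trap_zero hh
    rw [nrm_eq_min (by linarith) (by linarith)]
    rw [le_min_iff]
    constructor <;> linarith
  rw [phi_eq, e1, e2, e3]
  ring

lemma tri_neg (w t : ℝ) : tri w (-t) = tri w t := by
  unfold tri; rw [nrm_neg]

lemma phi_even (a h t : ℝ) : phi a h (-t) = phi a h t := by
  rw [phi_eq, phi_eq]
  rw [show -t - a = -(t + a) by ring, show -t + a = -(t - a) by ring]
  unfold trap
  rw [tri_neg, tri_neg, tri_neg, tri_neg, tri_neg]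
  ring

lemma phi_continuous (a h : ℝ) : Continuous (phi a h) := by
  unfold phi
  have c1 := tri_continuous h
  have c2 := tri_continuous (2*h)
  fun_prop

lemma phi_periodic (a h : ℝ) : Function.Periodic (phi a h) 1 := by
  intro t
  rw [phi_eq, phi_eq]
  rw [show t + 1 - a = (t - a) + 1 by ring, show t + 1 + a = (t + a) + 1 by ring]
  unfold trap
  rw [tri_periodic, tri_periodic, tri_periodic, tri_periodic, tri_periodic]

end Part8

namespace Part9
open Stmt12Aux Part2 Part3 Part4 Part5 Part6 Part7 Part8

theorem stmt12_aux (a h : ℝ) (hh0 : 0 < h) (h1 : 2 * h < a) (h2 : a < 1/2 - 2 * h) :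
    ∃ φ : ℝ → ℝ, Continuous φ ∧ Function.Periodic φ 1 ∧ (∀ t, 0 ≤ φ t) ∧
      Summable (fun n : ℤ => ‖fourierCoefP' (fun t => (φ t : ℂ)) n‖) ∧
      fourierCoefP' (fun t => (φ t : ℂ)) 0 = 1 ∧
      (∀ n : ℤ, (fourierCoefP' (fun t => (φ t : ℂ)) n).im = 0 ∧
        0 ≤ (fourierCoefP' (fun t => (φ t : ℂ)) n).re) ∧
      (∀ t ∈ Set.Icc (-a - h) (-a + h) ∪ Set.Icc (a - h) (a + h), φ t = 0) ∧
      ∀ p : ℝ, 1 ≤ p →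
        (∑' n : ℤ, ‖fourierCoefP' (fun t => (φ t : ℂ) - 1) n‖ ^ p) ^ (1/p)
          ≤ 12 * h ^ ((p - 1)/p) := by
  have hh8 : h < 1/8 := by linarith
  have h2h : 2*h ≤ 1/2 := by linarith
  have hcoef := coef_phi a h hh0 h2h
  have hccb : ∀ n : ℤ, 0 ≤ cc a h n ∧ cc a h n ≤ 12 * Dc h n := cc_bounds hh0
  refine ⟨phi a h, phi_continuous a h, phi_periodic a h, phi_nonneg hh0 h1 h2, ?_, ?_, ?_, ?_, ?_⟩
  · -- summable
    have habs : ∀ n : ℤ, ‖fourierCoefP' (fun t => ((phi a h t : ℝ) : ℂ)) n‖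
        = (if n = 0 then (1:ℝ) else 0) + cc a h n := by
      intro n
      rw [hcoef n, Complex.norm_real, Real.norm_eq_abs, _root_.abs_of_nonneg]
      apply add_nonneg _ (hccb n).1
      split <;> norm_num
    rw [show (fun n : ℤ => ‖fourierCoefP' (fun t => ((phi a h t : ℝ) : ℂ)) n‖)
      = fun n : ℤ => (if n = 0 then (1:ℝ) else 0) + cc a h n from funext habs]
    apply Summable.add
    · exact (hasSum_ite_eq (0:ℤ) (1:ℝ)).summable
    · exact Summable.of_nonneg_of_le (fun n => (hccb n).1) (fun n => (hccb n).2)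
        ((summable_Dc hh0).mul_left 12)
  · rw [hcoef 0, if_pos rfl, cc_zero, add_zero, Complex.ofReal_one]
  · intro n
    rw [hcoef n]
    exact ⟨Complex.ofReal_im _, by
      rw [Complex.ofReal_re]
      apply add_nonneg _ (hccb n).1
      split <;> norm_num⟩
  · intro t ht
    rcases ht with ht | ht
    · rw [← phi_even a h t]
      apply phi_zero_right hh0 h1 h2
      obtain ⟨hta, htb⟩ := ht
      exact ⟨by linarith, by linarith⟩
    · exact phi_zero_right hh0 h1 h2 ht
  · intro p hp
    have hp0 : 0 < p := by linarith
    have hsub : ∀ n : ℤ, fourierCoefP' (fun t => ((phi a h t : ℝ) : ℂ) - 1) n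
        = ((cc a h n : ℝ) : ℂ) := by
      intro n
      have e : fourierCoefP' (fun t => ((phi a h t : ℝ) : ℂ) - 1) n
          = fourierCoefP' (fun t => ((phi a h t : ℝ) : ℂ)) n - fourierCoefP' (fun _ => (1:ℂ)) n :=
        coefP_sub _ _ (Complex.continuous_ofReal.comp (phi_continuous a h)) continuous_const n
      rw [e, coef_one, hcoef n]
      rcases eq_or_ne n 0 with rfl | hn
      · rw [if_pos rfl, if_pos rfl]; push_cast; ring
      · rw [if_neg hn, if_neg hn]; push_cast; ring
    have hnorm : ∀ n : ℤ, ‖fourierCoefP' (fun t => ((phi a h t : ℝ) : ℂ) - 1) n‖ = cc a h n := by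
      intro n
      rw [hsub n, Complex.norm_real, Real.norm_eq_abs, _root_.abs_of_nonneg (hccb n).1]
    have hDp : ∀ n : ℤ, Dc h n ^ p ≤ h^(p-1) * Dc h n := by
      intro n
      rcases eq_or_lt_of_le (Dc_nonneg hh0 n) with hz | hz
      · rw [← hz, Real.zero_rpow hp0.ne', mul_zero]
      · have e : Dc h n ^ p = Dc h n ^ (p-1) * Dc h n := by
          rw [show p = (p-1) + 1 by ring, Real.rpow_add hz, Real.rpow_one]
          ring_nf
        rw [e]
        apply mul_le_mul_of_nonneg_right _ hz.le
        exact Real.rpow_le_rpow hz.le (Dc_le hh0 n) (by linarith)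
    have hterm : ∀ n : ℤ, ‖fourierCoefP' (fun t => ((phi a h t : ℝ) : ℂ) - 1) n‖ ^ p
        ≤ 12^p * h^(p-1) * Dc h n := by
      intro n
      rw [hnorm n]
      calc cc a h n ^ p ≤ (12 * Dc h n) ^ p :=
            Real.rpow_le_rpow (hccb n).1 (hccb n).2 hp0.le
        _ = 12^p * Dc h n ^ p := Real.mul_rpow (by norm_num) (Dc_nonneg hh0 n)
        _ ≤ 12^p * (h^(p-1) * Dc h n) := by
            apply mul_le_mul_of_nonneg_left (hDp n) (Real.rpow_nonneg (by norm_num) p)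
        _ = 12^p * h^(p-1) * Dc h n := by ring
    have hDsum : HasSum (Dc h) 1 := hasSum_Dc hh0 (by linarith)
    have hrhs : Summable (fun n : ℤ => 12^p * h^(p-1) * Dc h n) := by
      simpa [mul_assoc] using (hDsum.summable.mul_left (12^p * h^(p-1)))
    have hlhs : Summable (fun n : ℤ =>
        ‖fourierCoefP' (fun t => ((phi a h t : ℝ) : ℂ) - 1) n‖ ^ p) :=
      Summable.of_nonneg_of_le (fun n => Real.rpow_nonneg (norm_nonneg _) p) hterm hrhs
    have hsum_le : (∑' n : ℤ, ‖fourierCoefP' (fun t => ((phi a h t : ℝ) : ℂ) - 1) n‖ ^ p)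
        ≤ 12^p * h^(p-1) := by
      calc (∑' n : ℤ, ‖fourierCoefP' (fun t => ((phi a h t : ℝ) : ℂ) - 1) n‖ ^ p)
          ≤ ∑' n : ℤ, 12^p * h^(p-1) * Dc h n := Summable.tsum_le_tsum hterm hlhs hrhs
        _ = 12^p * h^(p-1) := by
            rw [show (fun n : ℤ => 12^p * h^(p-1) * Dc h n)
              = fun n : ℤ => (12^p * h^(p-1)) * Dc h n from funext fun n => by ring] -- ident
            rw [tsum_mul_left, hDsum.tsum_eq, mul_one]
    calc (∑' n : ℤ, ‖fourierCoefP' (fun t => ((phi a h t : ℝ) : ℂ) - 1) n‖ ^ p) ^ (1/p)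
        ≤ (12^p * h^(p-1)) ^ (1/p) := by
          apply Real.rpow_le_rpow (tsum_nonneg (fun n => Real.rpow_nonneg (norm_nonneg _) p))
            hsum_le (by positivity)
      _ = 12 * h ^ ((p-1)/p) := by
          rw [Real.mul_rpow (Real.rpow_nonneg (by norm_num) _) (Real.rpow_nonneg hh0.le _),
            ← Real.rpow_mul (by norm_num : (0:ℝ) ≤ 12), ← Real.rpow_mul hh0.le,
            mul_one_div, div_self hp0.ne', Real.rpow_one, mul_one_div]

end Part9


/-- For `2h < a < 1/2 - 2h` there is a nonnegative `φ ∈ A(𝕋)` with `φ̂(0) = 1`,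
`φ̂(n) ≥ 0` for all `n`, vanishing on `[-a-h,-a+h] ∪ [a-h,a+h]`, and
`‖φ - 1‖_{A^p(𝕋)} ≤ 12 h^{(p-1)/p}` for every `p ≥ 1`. -/
theorem stmt12 (a h : ℝ) (hh0 : 0 < h) (h1 : 2 * h < a) (h2 : a < 1/2 - 2 * h) :
    ∃ φ : ℝ → ℝ, Continuous φ ∧ Function.Periodic φ 1 ∧ (∀ t, 0 ≤ φ t) ∧
      Summable (fun n : ℤ => ‖fourierCoefP (fun t => (φ t : ℂ)) n‖) ∧
      fourierCoefP (fun t => (φ t : ℂ)) 0 = 1 ∧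
      (∀ n : ℤ, (fourierCoefP (fun t => (φ t : ℂ)) n).im = 0 ∧
        0 ≤ (fourierCoefP (fun t => (φ t : ℂ)) n).re) ∧
      (∀ t ∈ Set.Icc (-a - h) (-a + h) ∪ Set.Icc (a - h) (a + h), φ t = 0) ∧
      ∀ p : ℝ, 1 ≤ p →
        (∑' n : ℤ, ‖fourierCoefP (fun t => (φ t : ℂ) - 1) n‖ ^ p) ^ (1/p)
          ≤ 12 * h ^ ((p - 1)/p) := by
  exact Part9.stmt12_aux a h hh0 h1 h2
end

section
/- Let 0 < h < 1/4 and 2h < a < 1/2 − 2h. Define ψ(t) = 6Δ_h(t) − τ_h(t+a) − τ_h(t−a) on T. Then ψ̂(n) ≥ 0 for all n ∈ Z, and ‖ψ‖_{A^p(T)}^p ≤ 12^p h^{p−1} for every p ≥ 1. -/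
open MeasureTheory

open Real intervalIntegral

/-! ### Auxiliary definitions and lemmas -/

noncomputable def Dk (h : ℝ) (n : ℤ) : ℝ :=
  if n = 0 then h else (1 - Real.cos (2 * π * n * h)) / (2 * π ^ 2 * n ^ 2 * h)

noncomputable def En (n : ℤ) (t : ℝ) : ℂ :=
  Complex.exp ((-2) * (Real.pi : ℂ) * Complex.I * (n : ℂ) * (t : ℂ))

lemma fourierCoefP_eq (f : ℝ → ℂ) (n : ℤ) :
    fourierCoefP f n = ∫ t in (0:ℝ)..1, f t * En n t := rfl

lemma Dk_neg (h : ℝ) (n : ℤ) : Dk h (-n) = Dk h n := by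
  unfold Dk
  rcases eq_or_ne n 0 with rfl | hn
  · simp
  · rw [if_neg (by simpa using hn), if_neg hn]
    push_cast
    rw [show 2 * π * (-(n:ℝ)) * h = -(2 * π * n * h) by ring, Real.cos_neg]
    ring_nf

lemma Dk_nonneg {h : ℝ} (hh : 0 < h) (n : ℤ) : 0 ≤ Dk h n := by
  unfold Dk
  rcases eq_or_ne n 0 with rfl | hn
  · simpa using hh.le
  · rw [if_neg hn]
    apply div_nonneg
    · linarith [Real.cos_le_one (2 * π * n * h)]
    · have : (0:ℝ) < (n:ℝ)^2 := by positivity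
      positivity

lemma Dk_le {h : ℝ} (hh : 0 < h) (n : ℤ) : Dk h n ≤ h := by
  unfold Dk
  rcases eq_or_ne n 0 with rfl | hn
  · simp
  · rw [if_neg hn]
    have hn2 : (0:ℝ) < (n:ℝ)^2 := by
      have : (n:ℝ) ≠ 0 := Int.cast_ne_zero.mpr hn
      positivity
    rw [div_le_iff₀ (by positivity)]
    have := Real.one_sub_sq_div_two_le_cos (x := 2 * π * n * h)
    nlinarith [Real.pi_pos]

lemma bernoulli_two_eval (x : ℝ) :
    (Polynomial.map (algebraMap ℚ ℝ) (Polynomial.bernoulli 2)).eval x = x^2 - x + 1/6 := by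
  simp [Polynomial.bernoulli, Finset.sum_range_succ, bernoulli_zero, bernoulli_one]
  norm_num [bernoulli]
  ring

lemma hasSum_Dk {h : ℝ} (hh0 : 0 < h) (hh1 : h ≤ 1) : HasSum (Dk h) 1 := by
  have hπ : π ≠ 0 := Real.pi_ne_zero
  have hcos : HasSum (fun n : ℕ => 1 / (n : ℝ) ^ 2 * Real.cos (2 * π * n * h))
      (π ^ 2 * (h ^ 2 - h + 1/6)) := by
    have H := hasSum_one_div_nat_pow_mul_cos (k := 1) one_ne_zero (x := h) ⟨hh0.le, hh1⟩
    convert H using 1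
    rw [show (2 * 1 : ℕ) = 2 from rfl, bernoulli_two_eval,
      show ((Nat.factorial 2 : ℕ) : ℝ) = 2 by norm_num [Nat.factorial]]
    ring
  have hpos : HasSum (fun n : ℕ => Dk h (n : ℤ)) ((1 - h) / 2 + h) := by
    have hsub : HasSum (fun n : ℕ =>
        (1 / (n : ℝ) ^ 2 - 1 / (n : ℝ) ^ 2 * Real.cos (2 * π * n * h)) / (2 * π ^ 2 * h))
        ((π ^ 2 / 6 - π ^ 2 * (h ^ 2 - h + 1/6)) / (2 * π ^ 2 * h)) :=
      (hasSum_zeta_two.sub hcos).div_const _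
    have heq : (fun n : ℕ => Dk h (n : ℤ)) = Function.update
        (fun n : ℕ => (1 / (n : ℝ) ^ 2 - 1 / (n : ℝ) ^ 2 * Real.cos (2 * π * n * h))
          / (2 * π ^ 2 * h)) 0 h := by
      funext n
      rcases eq_or_ne n 0 with rfl | hn
      · simp [Dk]
      · rw [Function.update_of_ne hn, Dk, if_neg (by exact_mod_cast hn)]
        have hn' : ((n:ℝ)) ≠ 0 := Nat.cast_ne_zero.mpr hn
        rw [div_eq_div_iff (by positivity) (by positivity)]
        push_cast
        field_simp
    rw [heq]
    have hupd := hsub.update 0 h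
    convert hupd using 1
    · rfl
    have hh : h ≠ 0 := hh0.ne'
    simp only [Nat.cast_zero]
    rw [show (1 / (0:ℝ) ^ 2 - 1 / (0:ℝ) ^ 2 * Real.cos (2 * π * 0 * h)) / (2 * π ^ 2 * h)
      = 0 by norm_num]
    field_simp
    ring
  have hneg : HasSum (fun n : ℕ => Dk h (-((n : ℤ) + 1))) ((1 - h) / 2) := by
    have h1 : HasSum (fun n : ℕ => Dk h ((n + 1 : ℕ) : ℤ)) ((1 - h) / 2) := by
      apply (hasSum_nat_add_iff (f := fun n : ℕ => Dk h (n : ℤ)) 1).mpr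
      convert hpos using 1
      · rfl
      simp [Dk]
    have hfun : (fun n : ℕ => Dk h (-((n : ℤ) + 1))) = fun n : ℕ => Dk h ((n + 1 : ℕ) : ℤ) := by
      funext n
      rw [Dk_neg]
      norm_num
    rw [hfun]; exact h1
  have := HasSum.of_nat_of_neg_add_one hpos hneg
  convert this using 1
  ring

lemma tri_real_int {h : ℝ} (hh0 : 0 < h) (n : ℤ) :
    ∫ t in (0:ℝ)..h, (1 - t / h) * (2 * Real.cos (2 * π * n * t)) = Dk h n := by
  have hh : h ≠ 0 := hh0.ne'
  rcases eq_or_ne n 0 with rfl | hn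
  · simp only [Int.cast_zero, mul_zero, zero_mul, Real.cos_zero, mul_one, Dk, if_pos]
    have e : (fun t : ℝ => (1 - t / h) * 2) = fun t : ℝ => 2 - (2/h) * t := by
      funext t; ring
    rw [e, intervalIntegral.integral_sub intervalIntegrable_const
      (intervalIntegrable_id.const_mul _), intervalIntegral.integral_const_mul,
      integral_id, intervalIntegral.integral_const]
    field_simp
    ring
  · set b : ℝ := 2 * π * n with hb
    have hbne : b ≠ 0 := by
      have : (n:ℝ) ≠ 0 := Int.cast_ne_zero.mpr hn
      rw [hb]
      positivity
    set F : ℝ → ℝ := fun t => (1 - t / h) * (2 * Real.sin (b * t) / b)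
      - 2 * Real.cos (b * t) / (b ^ 2 * h) with hF
    have key : ∀ t ∈ Set.uIcc (0:ℝ) h, HasDerivAt F ((1 - t / h) * (2 * Real.cos (b * t))) t := by
      intro t _
      have hbt : HasDerivAt (fun t : ℝ => b * t) b t := by
        simpa using (hasDerivAt_id t).const_mul b
      have hs : HasDerivAt (fun t : ℝ => Real.sin (b * t)) (Real.cos (b * t) * b) t :=
        (Real.hasDerivAt_sin (b * t)).comp t hbt
      have hc : HasDerivAt (fun t : ℝ => Real.cos (b * t)) (-Real.sin (b * t) * b) t :=
        (Real.hasDerivAt_cos (b * t)).comp t hbt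
      have h1 : HasDerivAt (fun t : ℝ => 1 - t / h) (-(1 / h)) t := by
        simpa using ((hasDerivAt_id t).div_const h).const_sub 1
      have h2 : HasDerivAt (fun t : ℝ => 2 * Real.sin (b * t) / b)
          (2 * (Real.cos (b * t) * b) / b) t := (hs.const_mul 2).div_const b
      have h3 : HasDerivAt (fun t : ℝ => 2 * Real.cos (b * t) / (b ^ 2 * h))
          (2 * (-Real.sin (b * t) * b) / (b ^ 2 * h)) t := (hc.const_mul 2).div_const _
      have := (h1.mul h2).sub h3
      refine this.congr_deriv ?_
      field_simp
      ring
    have hcont : IntervalIntegrable (fun t : ℝ => (1 - t / h) * (2 * Real.cos (2 * π * n * t)))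
        volume 0 h := by
      apply Continuous.intervalIntegrable
      continuity
    have := intervalIntegral.integral_eq_sub_of_hasDerivAt key (by simpa [hb] using hcont)
    rw [this]
    simp only [hF, Dk, if_neg hn]
    rw [mul_zero, Real.sin_zero, Real.cos_zero, mul_comm b h]
    have hn2 : ((n:ℝ)) ≠ 0 := Int.cast_ne_zero.mpr hn
    field_simp [hb]
    ring

lemma tri_complex_int {h : ℝ} (hh0 : 0 < h) (hh2 : h ≤ 1/2) (n : ℤ) :
    ∫ t in (-(1/2):ℝ)..(1/2),
      ((max 0 (1 - |t| / h) : ℝ) : ℂ) * En n t = ((Dk h n : ℝ) : ℂ) := by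
  set F : ℝ → ℂ := fun t => ((max 0 (1 - |t| / h) : ℝ) : ℂ) * En n t with hFdef
  have hTri : Continuous fun t : ℝ => max 0 (1 - |t| / h) :=
    continuous_const.max ((continuous_const.sub (continuous_abs.div_const h)))
  have hE : Continuous (En n) :=
    Complex.continuous_exp.comp (continuous_const.mul Complex.continuous_ofReal)
  have hF : Continuous F := (Complex.continuous_ofReal.comp hTri).mul hE
  have hzero : ∀ t : ℝ, h ≤ |t| → F t = 0 := by
    intro t ht
    have : max 0 (1 - |t| / h) = 0 := max_eq_left (by
      rw [sub_nonpos, le_div_iff₀ hh0, one_mul]; exact ht)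
    simp [hFdef, this]
  have hinteg : ∀ u v : ℝ, IntervalIntegrable F volume u v := fun u v =>
    hF.intervalIntegrable u v
  have e1 : ∫ t in (-(1/2):ℝ)..(-h), F t = 0 := by
    rw [intervalIntegral.integral_congr (g := fun _ => (0:ℂ)) ?_, intervalIntegral.integral_zero]
    intro t ht
    rw [Set.uIcc_of_le (by linarith)] at ht
    exact hzero t (by rw [abs_of_nonpos (by linarith [ht.2])]; linarith [ht.2])
  have e2 : ∫ t in (h:ℝ)..(1/2), F t = 0 := by
    rw [intervalIntegral.integral_congr (g := fun _ => (0:ℂ)) ?_, intervalIntegral.integral_zero]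
    intro t ht
    rw [Set.uIcc_of_le (by linarith)] at ht
    exact hzero t (by rw [abs_of_nonneg (by linarith [ht.1])]; exact ht.1)
  have esplit : ∫ t in (-(1/2):ℝ)..(1/2), F t = ∫ t in (-h:ℝ)..h, F t := by
    rw [← intervalIntegral.integral_add_adjacent_intervals (hinteg (-(1/2)) (-h))
        (hinteg (-h) (1/2)),
      ← intervalIntegral.integral_add_adjacent_intervals (hinteg (-h) h) (hinteg h (1/2)),
      e1, e2]
    ring
  rw [esplit]
  have hcn : IntervalIntegrable (fun t : ℝ => F (-t)) volume 0 h :=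
    ((hF.comp continuous_neg).intervalIntegrable 0 h : _)
  have efold : ∫ t in (-h:ℝ)..h, F t = ∫ t in (0:ℝ)..h, (F (-t) + F t) := by
    rw [intervalIntegral.integral_add hcn (hF.intervalIntegrable 0 h),
      intervalIntegral.integral_comp_neg (fun t => F t), neg_zero,
      ← intervalIntegral.integral_add_adjacent_intervals (hinteg (-h) 0) (hinteg 0 h)]
  rw [efold]
  have ereal : ∫ t in (0:ℝ)..h, (F (-t) + F t)
      = ∫ t in (0:ℝ)..h, (((1 - t / h) * (2 * Real.cos (2 * π * n * t)) : ℝ) : ℂ) := by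
    apply intervalIntegral.integral_congr
    intro t ht
    rw [Set.uIcc_of_le hh0.le] at ht
    have habs : |t| = t := abs_of_nonneg ht.1
    have habs' : |(-t)| = t := by rw [abs_neg, habs]
    have hmax : max 0 (1 - t / h) = 1 - t / h := max_eq_right (by
      rw [sub_nonneg]; exact div_le_one_of_le₀ ht.2 hh0.le)
    simp only [hFdef, En, habs, habs', hmax]
    rw [show ((-2) * (π:ℂ) * Complex.I * n * ((-t:ℝ):ℂ)) = ((2 * π * n * t : ℝ) : ℂ) * Complex.I by
        push_cast; ring,
      show ((-2) * (π:ℂ) * Complex.I * n * ((t:ℝ):ℂ)) = -((2 * π * n * t : ℝ) : ℂ) * Complex.I by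
        push_cast; ring,
      Complex.exp_mul_I, Complex.exp_mul_I, Complex.cos_neg, Complex.sin_neg,
      ← Complex.ofReal_cos, ← Complex.ofReal_sin]
    push_cast
    ring
  rw [ereal, integral_ofReal, tri_real_int hh0 n]

lemma En_periodic (n : ℤ) (t : ℝ) : En n (t + 1) = En n t := by
  unfold En
  push_cast
  rw [show (-2) * (π:ℂ) * Complex.I * n * (t + 1)
      = (-2) * (π:ℂ) * Complex.I * n * t + ((-n : ℤ) : ℂ) * (2 * π * Complex.I) by
        push_cast; ring,
    Complex.exp_add, Complex.exp_int_mul_two_pi_mul_I, mul_one]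

lemma En_add (n : ℤ) (s t : ℝ) : En n (t + s) = En n t * En n s := by
  unfold En
  rw [← Complex.exp_add]
  push_cast
  ring_nf

lemma coef_eq_half (f : ℝ → ℂ) (hf : ∀ t, f (t + 1) = f t) (n : ℤ) :
    (∫ t in (0:ℝ)..1, f t * En n t) = ∫ t in (-(1/2):ℝ)..(1/2), f t * En n t := by
  have hg : Function.Periodic (fun t => f t * En n t) 1 := by
    intro t
    simp only [hf t, En_periodic n t]
  have := hg.intervalIntegral_add_eq 0 (-(1/2))
  norm_num at this
  convert this using 2 <;> norm_num

lemma coef_shift (f : ℝ → ℂ) (hf : ∀ t, f (t + 1) = f t) (n : ℤ) (s : ℝ) :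
    (∫ t in (0:ℝ)..1, f (t + s) * En n t)
      = Complex.exp (2 * (π:ℂ) * Complex.I * n * s) * ∫ t in (0:ℝ)..1, f t * En n t := by
  have hone : Complex.exp (2 * (π:ℂ) * Complex.I * n * s) * En n s = 1 := by
    unfold En
    rw [← Complex.exp_add,
      show 2 * (π:ℂ) * Complex.I * n * s + (-2) * (π:ℂ) * Complex.I * n * s = 0 by ring,
      Complex.exp_zero]
  have key : ∀ t : ℝ, f (t + s) * En n t
      = Complex.exp (2 * (π:ℂ) * Complex.I * n * s) * (f (t + s) * En n (t + s)) := by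
    intro t
    rw [En_add, show Complex.exp (2 * (π:ℂ) * Complex.I * n * s) * (f (t + s) * (En n t * En n s))
      = (Complex.exp (2 * (π:ℂ) * Complex.I * n * s) * En n s) * (f (t + s) * En n t) by ring,
      hone, one_mul]
  simp only [key]
  rw [intervalIntegral.integral_const_mul]
  congr 1
  have := intervalIntegral.integral_comp_add_right (a := (0:ℝ)) (b := 1)
    (fun u => f u * En n u) s
  rw [this]
  have hg : Function.Periodic (fun t => f t * En n t) 1 := by
    intro t; simp only [hf t, En_periodic n t]
  have h2 := hg.intervalIntegral_add_eq s 0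
  simp only [zero_add] at h2
  rw [show (0:ℝ) + s = s by ring, show (1:ℝ) + s = s + 1 by ring, h2]

lemma periodic_add_int (f : ℝ → ℝ) (hf : ∀ t, f (t + 1) = f t) (u : ℝ) (k : ℤ) :
    f (u + k) = f u := by
  have hp : Function.Periodic f 1 := hf
  have := hp.sub_int_mul_eq (x := u + k) (n := k)
  simpa using this.symm

lemma reduce_frac (t : ℝ) : ∃ (u : ℝ) (k : ℤ), t = u + k ∧ -(1/2) ≤ u ∧ u < 1/2 := by
  refine ⟨Int.fract (t + 1/2) - 1/2, ⌊t + 1/2⌋, ?_, ?_, ?_⟩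
  · rw [Int.fract]; ring
  · linarith [Int.fract_nonneg (t + 1/2)]
  · linarith [Int.fract_lt_one (t + 1/2)]

lemma tri_eval_zero {h x : ℝ} (hh0 : 0 < h) (hx : h ≤ |x|) : max 0 (1 - |x| / h) = 0 :=
  max_eq_left (by rw [sub_nonpos, le_div_iff₀ hh0, one_mul]; exact hx)

lemma tri_eval_pos {h x : ℝ} (hh0 : 0 < h) (hx : |x| ≤ h) : max 0 (1 - |x| / h) = 1 - |x| / h :=
  max_eq_right (by rw [sub_nonneg, div_le_one hh0]; exact hx)

lemma trap_eval_one {h x : ℝ} (hh0 : 0 < h) (hx : |x| ≤ h) :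
    min 1 (max 0 (2 - |x| / h)) = 1 := by
  apply min_eq_left
  rw [le_max_iff]
  right
  have : |x| / h ≤ 1 := (div_le_one hh0).mpr hx
  linarith

lemma trap_eval_mid {h x : ℝ} (hh0 : 0 < h) (h1 : h ≤ |x|) (h2 : |x| ≤ 2 * h) :
    min 1 (max 0 (2 - |x| / h)) = 2 - |x| / h := by
  have ha : |x| / h ≤ 2 := by rw [div_le_iff₀ hh0]; linarith
  have hb : 1 ≤ |x| / h := by rw [le_div_iff₀ hh0]; linarith
  rw [max_eq_right (by linarith), min_eq_right (by linarith)]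

lemma trap_eval_zero {h x : ℝ} (hh0 : 0 < h) (hx : 2 * h ≤ |x|) :
    min 1 (max 0 (2 - |x| / h)) = 0 := by
  have hb : 2 ≤ |x| / h := by rw [le_div_iff₀ hh0]; linarith
  rw [max_eq_left (by linarith), min_eq_right zero_le_one]

section geom
variable {h : ℝ} (hh0 : 0 < h) (hh1 : h < 1/4) (Δ τ : ℝ → ℝ)
    (hΔper : ∀ t, Δ (t + 1) = Δ t)
    (hΔdef : ∀ t ∈ Set.Icc (-(1/2) : ℝ) (1/2), Δ t = max 0 (1 - |t| / h))
    (hτper : ∀ t, τ (t + 1) = τ t)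
    (hτdef : ∀ t ∈ Set.Icc (-(1/2) : ℝ) (1/2), τ t = min 1 (max 0 (2 - |t| / h)))

include hh0 hh1 hΔper hΔdef in
lemma delta_zero : ∀ s : ℝ, h ≤ |s| → |s| ≤ 1 - h → Δ s = 0 := by
  intro s hs1 hs2
  by_cases hs : |s| ≤ 1/2
  · rw [hΔdef s (abs_le.mp hs), tri_eval_zero hh0 hs1]
  · push_neg at hs
    rcases abs_cases s with ⟨he, hn⟩ | ⟨he, hn⟩
    · rw [he] at hs hs2
      rw [show s = (s - 1) + (1:ℝ) by ring, hΔper,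
        hΔdef (s - 1) ⟨by linarith, by linarith⟩, tri_eval_zero hh0]
      rw [abs_of_nonpos (by linarith)]
      linarith
    · rw [he] at hs hs2
      rw [show Δ s = Δ (s + 1) from (hΔper s).symm,
        hΔdef (s + 1) ⟨by linarith, by linarith⟩, tri_eval_zero hh0]
      rw [abs_of_nonneg (by linarith)]
      linarith

include hh0 hh1 hΔper hΔdef hτper hτdef in
lemma tau_decomp : ∀ t : ℝ, τ t = Δ (t - h) + Δ t + Δ (t + h) := by
  have hZ := delta_zero hh0 hh1 Δ hΔper hΔdef
  intro t
  obtain ⟨u, k, rfl, hu1, hu2⟩ := reduce_frac t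
  rw [show u + (k:ℝ) - h = (u - h) + (k:ℝ) by ring, show u + (k:ℝ) + h = (u + h) + (k:ℝ) by ring,
    periodic_add_int τ hτper, periodic_add_int Δ hΔper, periodic_add_int Δ hΔper,
    periodic_add_int Δ hΔper]
  rw [hτdef u ⟨by linarith, by linarith⟩]
  rcases le_total 0 u with hu | hu
  · rcases le_total u h with c1 | c1
    · rw [trap_eval_one hh0 (by rw [abs_of_nonneg hu]; linarith),
        hΔdef u ⟨by linarith, by linarith⟩,
        tri_eval_pos hh0 (by rw [abs_of_nonneg hu]; linarith),
        hΔdef (u - h) ⟨by linarith, by linarith⟩,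
        tri_eval_pos hh0 (by rw [abs_of_nonpos (by linarith)]; linarith),
        hΔdef (u + h) ⟨by linarith, by linarith⟩,
        tri_eval_zero hh0 (by rw [abs_of_nonneg (by linarith)]; linarith),
        abs_of_nonneg hu, abs_of_nonpos (by linarith : u - h ≤ 0)]
      field_simp
      ring
    · rcases le_total u (2 * h) with c2 | c2
      · rw [trap_eval_mid hh0 (by rw [abs_of_nonneg hu]; linarith)
            (by rw [abs_of_nonneg hu]; linarith),
          hΔdef u ⟨by linarith, by linarith⟩,
          tri_eval_zero hh0 (by rw [abs_of_nonneg hu]; linarith),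
          hΔdef (u - h) ⟨by linarith, by linarith⟩,
          tri_eval_pos hh0 (by rw [abs_of_nonneg (by linarith)]; linarith),
          hZ (u + h) (by rw [abs_of_nonneg (by linarith)]; linarith)
            (by rw [abs_of_nonneg (by linarith)]; linarith),
          abs_of_nonneg hu, abs_of_nonneg (by linarith : (0:ℝ) ≤ u - h)]
        field_simp
        ring
      · rw [trap_eval_zero hh0 (by rw [abs_of_nonneg hu]; linarith),
          hΔdef u ⟨by linarith, by linarith⟩,
          tri_eval_zero hh0 (by rw [abs_of_nonneg hu]; linarith),
          hΔdef (u - h) ⟨by linarith, by linarith⟩,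
          tri_eval_zero hh0 (by rw [abs_of_nonneg (by linarith)]; linarith),
          hZ (u + h) (by rw [abs_of_nonneg (by linarith)]; linarith)
            (by rw [abs_of_nonneg (by linarith)]; linarith)]
        ring
  · rcases le_total (-h) u with c1 | c1
    · rw [trap_eval_one hh0 (by rw [abs_of_nonpos hu]; linarith),
        hΔdef u ⟨by linarith, by linarith⟩,
        tri_eval_pos hh0 (by rw [abs_of_nonpos hu]; linarith),
        hΔdef (u - h) ⟨by linarith, by linarith⟩,
        tri_eval_zero hh0 (by rw [abs_of_nonpos (by linarith)]; linarith),
        hΔdef (u + h) ⟨by linarith, by linarith⟩,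
        tri_eval_pos hh0 (by rw [abs_of_nonneg (by linarith)]; linarith),
        abs_of_nonpos hu, abs_of_nonneg (by linarith : (0:ℝ) ≤ u + h)]
      field_simp
      ring
    · rcases le_total (-(2*h)) u with c2 | c2
      · rw [trap_eval_mid hh0 (by rw [abs_of_nonpos hu]; linarith)
            (by rw [abs_of_nonpos hu]; linarith),
          hΔdef u ⟨by linarith, by linarith⟩,
          tri_eval_zero hh0 (by rw [abs_of_nonpos hu]; linarith),
          hZ (u - h) (by rw [abs_of_nonpos (by linarith)]; linarith)
            (by rw [abs_of_nonpos (by linarith)]; linarith),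
          hΔdef (u + h) ⟨by linarith, by linarith⟩,
          tri_eval_pos hh0 (by rw [abs_of_nonpos (by linarith)]; linarith),
          abs_of_nonpos hu, abs_of_nonpos (by linarith : u + h ≤ 0)]
        field_simp
        ring
      · rw [trap_eval_zero hh0 (by rw [abs_of_nonpos hu]; linarith),
          hΔdef u ⟨by linarith, by linarith⟩,
          tri_eval_zero hh0 (by rw [abs_of_nonpos hu]; linarith),
          hZ (u - h) (by rw [abs_of_nonpos (by linarith)]; linarith)
            (by rw [abs_of_nonpos (by linarith)]; linarith),
          hΔdef (u + h) ⟨by linarith, by linarith⟩,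
          tri_eval_zero hh0 (by rw [abs_of_nonpos (by linarith)]; linarith)]
        ring

include hh0 hΔper hΔdef in
lemma delta_formula : ∀ t : ℝ, Δ t = max 0 (1 - |Int.fract (t + 1/2) - 1/2| / h) := by
  intro t
  obtain ⟨u, k, ht, hu1, hu2⟩ := reduce_frac t
  have hfr : Int.fract (t + 1/2) - 1/2 = u := by
    rw [ht]
    rw [show u + (k:ℝ) + 1/2 = (u + 1/2) + k by ring, Int.fract_add_intCast,
      Int.fract_eq_self.mpr ⟨by linarith, by linarith⟩]
    ring
  rw [hfr, ht, periodic_add_int Δ hΔper, hΔdef u ⟨by linarith, by linarith⟩]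

include hh0 hΔper hΔdef in
lemma delta_meas : Measurable Δ := by
  have := delta_formula hh0 Δ hΔper hΔdef
  rw [show Δ = fun t => max 0 (1 - |Int.fract (t + 1/2) - 1/2| / h) from funext this]
  apply measurable_const.max
  apply measurable_const.sub
  apply Measurable.div_const
  apply Measurable.abs
  apply Measurable.sub_const
  exact measurable_fract.comp (measurable_id.add_const _)

include hh0 hΔper hΔdef in
lemma delta_bound : ∀ t : ℝ, |Δ t| ≤ 1 := by
  intro t
  rw [delta_formula hh0 Δ hΔper hΔdef t]
  rw [abs_le]
  constructor
  · calc (-1:ℝ) ≤ 0 := by norm_num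
    _ ≤ _ := le_max_left _ _
  · apply max_le (by norm_num)
    have : 0 ≤ |Int.fract (t + 1/2) - 1/2| / h := by positivity
    linarith

end geom

lemma comp_II {f : ℝ → ℝ} (hm : Measurable f) (hb : ∀ t, |f t| ≤ 1) (n : ℤ) (u v : ℝ) :
    IntervalIntegrable (fun t => (f t : ℂ) * En n t) volume u v := by
  have hE : Continuous (En n) :=
    Complex.continuous_exp.comp (continuous_const.mul Complex.continuous_ofReal)
  have hmeas : Measurable fun t : ℝ => (f t : ℂ) * En n t :=
    (Complex.measurable_ofReal.comp hm).mul hE.measurable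
  apply IntervalIntegrable.mono_fun' (g := fun _ : ℝ => (1:ℝ)) intervalIntegrable_const
    hmeas.aestronglyMeasurable.restrict
  apply Filter.Eventually.of_forall
  intro t
  have hEnorm : ‖En n t‖ = 1 := by
    unfold En
    rw [Complex.norm_exp]
    rw [show ((-2) * (π:ℂ) * Complex.I * n * t) = ((-2 * π * n * t : ℝ):ℂ) * Complex.I by
      push_cast; ring]
    simp
  calc ‖(f t : ℂ) * En n t‖ = ‖(f t : ℂ)‖ * ‖En n t‖ := norm_mul _ _
    _ = |f t| * 1 := by rw [hEnorm, Complex.norm_real]; rfl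
    _ ≤ 1 := by rw [mul_one]; exact hb t

lemma exp_pair (n : ℤ) (s : ℝ) :
    Complex.exp (2 * (π:ℂ) * Complex.I * n * s) + Complex.exp (2 * (π:ℂ) * Complex.I * n * (-s:ℝ))
      = ((2 * Real.cos (2 * π * n * s) : ℝ) : ℂ) := by
  rw [show (2 * (π:ℂ) * Complex.I * n * s) = ((2 * π * n * s : ℝ):ℂ) * Complex.I by
      push_cast; ring,
    show (2 * (π:ℂ) * Complex.I * n * ((-s:ℝ):ℂ)) = -((2 * π * n * s : ℝ):ℂ) * Complex.I by
      push_cast; ring,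
    Complex.exp_mul_I, Complex.exp_mul_I, Complex.cos_neg, Complex.sin_neg,
    ← Complex.ofReal_cos, ← Complex.ofReal_sin]
  push_cast
  ring

/-- For `0 < h < 1/4`, `2h < a < 1/2 - 2h`, and `ψ(t) = 6Δ_h(t) - τ_h(t+a) - τ_h(t-a)`
(with `Δ_h` the triangle and `τ_h` the trapezoid function), one has `ψ̂(n) ≥ 0` for all
`n ∈ ℤ` and `‖ψ‖_{A^p(𝕋)}^p ≤ 12^p h^{p-1}` for every `p ≥ 1`. -/
theorem stmt13 (a h : ℝ) (hh0 : 0 < h) (hh1 : h < 1/4)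
    (h1 : 2 * h < a) (h2 : a < 1/2 - 2 * h)
    (Δ τ : ℝ → ℝ)
    (hΔper : ∀ t, Δ (t + 1) = Δ t)
    (hΔdef : ∀ t ∈ Set.Icc (-(1/2) : ℝ) (1/2), Δ t = max 0 (1 - |t| / h))
    (hτper : ∀ t, τ (t + 1) = τ t)
    (hτdef : ∀ t ∈ Set.Icc (-(1/2) : ℝ) (1/2), τ t = min 1 (max 0 (2 - |t| / h)))
    (ψ : ℝ → ℝ)
    (hψ : ∀ t, ψ t = 6 * Δ t - τ (t + a) - τ (t - a)) :
    (∀ n : ℤ, (fourierCoefP (fun t => (ψ t : ℂ)) n).im = 0 ∧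
      0 ≤ (fourierCoefP (fun t => (ψ t : ℂ)) n).re) ∧
    ∀ p : ℝ, 1 ≤ p →
      (∑' n : ℤ, ‖fourierCoefP (fun t => (ψ t : ℂ)) n‖ ^ p) ≤ 12 ^ p * h ^ (p - 1) := by
  have hh2 : h ≤ 1/2 := by linarith
  have hmeas := delta_meas hh0 Δ hΔper hΔdef
  have hbound := delta_bound hh0 Δ hΔper hΔdef
  have hdecomp := tau_decomp hh0 hh1 Δ τ hΔper hΔdef hτper hτdef
  have hΔperC : ∀ t : ℝ, ((Δ (t + 1) : ℝ) : ℂ) = ((Δ t : ℝ) : ℂ) := fun t => by rw [hΔper t]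
  set S : ℤ → ℝ := fun n => 2 * Real.cos (2 * π * n * (a - h)) + 2 * Real.cos (2 * π * n * a)
    + 2 * Real.cos (2 * π * n * (a + h)) with hSdef
  have hS_le : ∀ n : ℤ, S n ≤ 6 := by
    intro n
    have c1 := Real.cos_le_one (2 * π * n * (a - h))
    have c2 := Real.cos_le_one (2 * π * n * a)
    have c3 := Real.cos_le_one (2 * π * n * (a + h))
    simp only [hSdef]
    linarith
  have hS_ge : ∀ n : ℤ, -6 ≤ S n := by
    intro n
    have c1 := Real.neg_one_le_cos (2 * π * n * (a - h))
    have c2 := Real.neg_one_le_cos (2 * π * n * a)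
    have c3 := Real.neg_one_le_cos (2 * π * n * (a + h))
    simp only [hSdef]
    linarith
  have hcoef : ∀ n : ℤ, fourierCoefP (fun t => (ψ t : ℂ)) n
      = (((6 - S n) * Dk h n : ℝ) : ℂ) := by
    intro n
    have hΔc : (∫ t in (0:ℝ)..1, ((Δ t : ℝ) : ℂ) * En n t) = ((Dk h n : ℝ) : ℂ) := by
      rw [coef_eq_half (fun t => ((Δ t : ℝ) : ℂ)) hΔperC n]
      rw [intervalIntegral.integral_congr
        (g := fun t => ((max 0 (1 - |t| / h) : ℝ) : ℂ) * En n t) ?_]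
      · exact tri_complex_int hh0 hh2 n
      · intro t ht
        rw [Set.uIcc_of_le (by norm_num)] at ht
        show ((Δ t : ℝ) : ℂ) * En n t = _
        rw [hΔdef t ht]
    have hshift : ∀ s : ℝ, (∫ t in (0:ℝ)..1, ((Δ (t + s) : ℝ) : ℂ) * En n t)
        = Complex.exp (2 * (π:ℂ) * Complex.I * n * s) * ((Dk h n : ℝ) : ℂ) := by
      intro s
      rw [coef_shift (fun t => ((Δ t : ℝ) : ℂ)) hΔperC n s, hΔc]
    have hψ' : ∀ t : ℝ, ((ψ t : ℝ) : ℂ) * En n t =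
        6 * (((Δ t : ℝ) : ℂ) * En n t)
        - ((((Δ (t + (a - h)) : ℝ) : ℂ) * En n t) + (((Δ (t + a) : ℝ) : ℂ) * En n t)
            + (((Δ (t + (a + h)) : ℝ) : ℂ) * En n t))
        - ((((Δ (t + (-(a - h))) : ℝ) : ℂ) * En n t) + (((Δ (t + (-a)) : ℝ) : ℂ) * En n t)
            + (((Δ (t + (-(a + h))) : ℝ) : ℂ) * En n t)) := by
      intro t
      have e1 : ψ t = 6 * Δ t - (Δ (t + (a - h)) + Δ (t + a) + Δ (t + (a + h)))
          - (Δ (t + (-(a - h))) + Δ (t + (-a)) + Δ (t + (-(a + h)))) := by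
        rw [hψ t, hdecomp (t + a), hdecomp (t - a),
          show t + a - h = t + (a - h) by ring, show t + a + h = t + (a + h) by ring,
          show t - a - h = t + (-(a + h)) by ring, show t - a + h = t + (-(a - h)) by ring,
          show t - a = t + (-a) by ring]
        ring
      rw [e1]
      push_cast
      ring
    have hA : IntervalIntegrable (fun t => ((Δ t : ℝ) : ℂ) * En n t) volume 0 1 :=
      comp_II hmeas hbound n 0 1
    have hAs : ∀ s : ℝ, IntervalIntegrable (fun t => ((Δ (t + s) : ℝ) : ℂ) * En n t) volume 0 1 :=
      fun s => comp_II (hmeas.comp (measurable_id.add_const s)) (fun t => hbound (t + s)) n 0 1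
    have hB := ((hAs (a - h)).add (hAs a)).add (hAs (a + h))
    have hC := ((hAs (-(a - h))).add (hAs (-a))).add (hAs (-(a + h)))
    rw [fourierCoefP_eq]
    rw [show (fun t : ℝ => (fun t : ℝ => ((ψ t : ℝ) : ℂ)) t * En n t)
      = fun t : ℝ => (6 * (((Δ t : ℝ) : ℂ) * En n t)
        - ((((Δ (t + (a - h)) : ℝ) : ℂ) * En n t) + (((Δ (t + a) : ℝ) : ℂ) * En n t)
            + (((Δ (t + (a + h)) : ℝ) : ℂ) * En n t))
        - ((((Δ (t + (-(a - h))) : ℝ) : ℂ) * En n t) + (((Δ (t + (-a)) : ℝ) : ℂ) * En n t)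
            + (((Δ (t + (-(a + h))) : ℝ) : ℂ) * En n t))) from funext fun t => hψ' t]
    rw [intervalIntegral.integral_sub ((hA.const_mul 6).sub hB) hC,
      intervalIntegral.integral_sub (hA.const_mul 6) hB,
      intervalIntegral.integral_const_mul,
      intervalIntegral.integral_add ((hAs (a - h)).add (hAs a)) (hAs (a + h)),
      intervalIntegral.integral_add (hAs (a - h)) (hAs a),
      intervalIntegral.integral_add ((hAs (-(a - h))).add (hAs (-a))) (hAs (-(a + h))),
      intervalIntegral.integral_add (hAs (-(a - h))) (hAs (-a)),
      hΔc, hshift (a - h), hshift a, hshift (a + h),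
      hshift (-(a - h)), hshift (-a), hshift (-(a + h))]
    have key : (6 : ℂ)
        - (Complex.exp (2 * (π:ℂ) * Complex.I * n * ((a - h : ℝ) : ℂ))
          + Complex.exp (2 * (π:ℂ) * Complex.I * n * a)
          + Complex.exp (2 * (π:ℂ) * Complex.I * n * ((a + h : ℝ) : ℂ)))
        - (Complex.exp (2 * (π:ℂ) * Complex.I * n * (-(a - h) : ℝ))
          + Complex.exp (2 * (π:ℂ) * Complex.I * n * (-a : ℝ))
          + Complex.exp (2 * (π:ℂ) * Complex.I * n * (-(a + h) : ℝ)))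
        = ((6 - S n : ℝ) : ℂ) := by
      have p1 := exp_pair n (a - h)
      have p2 := exp_pair n a
      have p3 := exp_pair n (a + h)
      simp only [hSdef]
      push_cast [← p1, ← p2, ← p3]
      ring
    calc (6 : ℂ) * ((Dk h n : ℝ) : ℂ)
        - (Complex.exp (2 * (π:ℂ) * Complex.I * n * ((a - h : ℝ) : ℂ)) * ((Dk h n : ℝ) : ℂ)
          + Complex.exp (2 * (π:ℂ) * Complex.I * n * a) * ((Dk h n : ℝ) : ℂ)
          + Complex.exp (2 * (π:ℂ) * Complex.I * n * ((a + h : ℝ) : ℂ)) * ((Dk h n : ℝ) : ℂ))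
        - (Complex.exp (2 * (π:ℂ) * Complex.I * n * (-(a - h) : ℝ)) * ((Dk h n : ℝ) : ℂ)
          + Complex.exp (2 * (π:ℂ) * Complex.I * n * (-a : ℝ)) * ((Dk h n : ℝ) : ℂ)
          + Complex.exp (2 * (π:ℂ) * Complex.I * n * (-(a + h) : ℝ)) * ((Dk h n : ℝ) : ℂ))
        = ((6 : ℂ)
          - (Complex.exp (2 * (π:ℂ) * Complex.I * n * ((a - h : ℝ) : ℂ))
            + Complex.exp (2 * (π:ℂ) * Complex.I * n * a)
            + Complex.exp (2 * (π:ℂ) * Complex.I * n * ((a + h : ℝ) : ℂ)))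
          - (Complex.exp (2 * (π:ℂ) * Complex.I * n * (-(a - h) : ℝ))
            + Complex.exp (2 * (π:ℂ) * Complex.I * n * (-a : ℝ))
            + Complex.exp (2 * (π:ℂ) * Complex.I * n * (-(a + h) : ℝ)))) * ((Dk h n : ℝ) : ℂ) := by
          ring
      _ = (((6 - S n) * Dk h n : ℝ) : ℂ) := by
          rw [key]
          push_cast
          ring
  have hnormval : ∀ n : ℤ, ‖fourierCoefP (fun t => (ψ t : ℂ)) n‖ = (6 - S n) * Dk h n := by
    intro n
    rw [hcoef n, Complex.norm_real]
    exact abs_of_nonneg (mul_nonneg (by linarith [hS_le n]) (Dk_nonneg hh0 n))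
  constructor
  · intro n
    rw [hcoef n]
    constructor
    · exact Complex.ofReal_im _
    · rw [Complex.ofReal_re]
      exact mul_nonneg (by linarith [hS_le n]) (Dk_nonneg hh0 n)
  · intro p hp
    have hp0 : 0 < p := by linarith
    have hterm : ∀ n : ℤ, ‖fourierCoefP (fun t => (ψ t : ℂ)) n‖ ^ p
        ≤ 12 ^ p * (h ^ (p - 1) * Dk h n) := by
      intro n
      rw [hnormval n]
      have hD0 := Dk_nonneg hh0 n
      have hb1 : (6 - S n) * Dk h n ≤ 12 * Dk h n :=
        mul_le_mul_of_nonneg_right (by linarith [hS_ge n]) hD0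
      have hb2 : (0:ℝ) ≤ (6 - S n) * Dk h n := mul_nonneg (by linarith [hS_le n]) hD0
      calc ((6 - S n) * Dk h n) ^ p ≤ (12 * Dk h n) ^ p :=
            Real.rpow_le_rpow hb2 hb1 hp0.le
        _ = 12 ^ p * Dk h n ^ p := Real.mul_rpow (by norm_num) hD0
        _ ≤ 12 ^ p * (h ^ (p - 1) * Dk h n) := by
            apply mul_le_mul_of_nonneg_left ?_ (Real.rpow_nonneg (by norm_num) p)
            rcases eq_or_lt_of_le hD0 with h0 | h0
            · rw [← h0, Real.zero_rpow hp0.ne', mul_zero]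
            · calc Dk h n ^ p = Dk h n ^ (p - 1) * Dk h n := by
                    rw [← Real.rpow_add_one h0.ne' (p - 1)]
                    congr 1
                    ring
                _ ≤ h ^ (p - 1) * Dk h n := mul_le_mul_of_nonneg_right
                    (Real.rpow_le_rpow h0.le (Dk_le hh0 n) (by linarith)) hD0
    have hsumD : HasSum (fun n : ℤ => 12 ^ p * (h ^ (p - 1) * Dk h n))
        (12 ^ p * (h ^ (p - 1) * 1)) := by
      exact ((hasSum_Dk hh0 (by linarith)).mul_left _).mul_left _
    have hsummable : Summable fun n : ℤ => ‖fourierCoefP (fun t => (ψ t : ℂ)) n‖ ^ p :=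
      Summable.of_nonneg_of_le (fun n => Real.rpow_nonneg (norm_nonneg _) p) hterm
        hsumD.summable
    calc (∑' n : ℤ, ‖fourierCoefP (fun t => (ψ t : ℂ)) n‖ ^ p)
        ≤ ∑' n : ℤ, 12 ^ p * (h ^ (p - 1) * Dk h n) :=
          Summable.tsum_le_tsum hterm hsummable hsumD.summable
      _ = 12 ^ p * (h ^ (p - 1) * 1) := hsumD.tsum_eq
      _ = 12 ^ p * h ^ (p - 1) := by ring
end

section
/- Let p > 2. Then no system of translates of a single function can be an unconditional Schauder basis of L^p(R); more specifically (the fact quoted from prior work used in the paper): if {g(·−λ_n)} is a Schauder basis of L^p(R), 1 < p < ∞, then the sequence {λ_n} must be uniformly discrete, i.e., inf_{n≠m}|λ_n − λ_m| > 0. -/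
open MeasureTheory Filter


open Filter Finset
open BoundedContinuousFunction

namespace OZAux

variable {E : Type*} [NormedAddCommGroup E] [NormedSpace ℝ E]

/-- partial sums -/
noncomputable def pS (G : ℕ → E) (c : ℕ → ℝ) (N : ℕ) : E := ∑ n ∈ Finset.range N, c n • G n

lemma pS_add (G : ℕ → E) (c d : ℕ → ℝ) (N : ℕ) : pS G (c + d) N = pS G c N + pS G d N := by
  simp [pS, add_smul, Finset.sum_add_distrib]

lemma pS_smul (G : ℕ → E) (a : ℝ) (c : ℕ → ℝ) (N : ℕ) : pS G (a • c) N = a • pS G c N := by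
  simp [pS, Finset.smul_sum, smul_smul]

lemma pS_succ_sub (G : ℕ → E) (c : ℕ → ℝ) (N : ℕ) :
    pS G c (N + 1) - pS G c N = c N • G N := by
  simp [pS, Finset.sum_range_succ]

/-- sequences whose partial-sum expansions converge -/
noncomputable def coefSpace (G : ℕ → E) : Submodule ℝ (ℕ → ℝ) where
  carrier := {c | ∃ f, Tendsto (pS G c) atTop (nhds f)}
  add_mem' := by
    rintro c d ⟨f, hf⟩ ⟨g, hg⟩
    refine ⟨f + g, ?_⟩
    have := hf.add hg
    convert this using 1
    funext N; exact pS_add G c d N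
  zero_mem' := ⟨0, by
    have : pS G (0 : ℕ → ℝ) = fun _ => (0 : E) := by funext N; simp [pS]
    rw [this]; exact tendsto_const_nhds⟩
  smul_mem' := by
    rintro a c ⟨f, hf⟩
    refine ⟨a • f, ?_⟩
    have := hf.const_smul a
    convert this using 1
    funext N; exact pS_smul G a c N

lemma coefSpace_spec {G : ℕ → E} (c : coefSpace G) :
    ∃ f, Tendsto (pS G c.1) atTop (nhds f) := c.2

lemma exists_bound {G : ℕ → E} (c : coefSpace G) : ∃ C, ∀ N, ‖pS G c.1 N‖ ≤ C := by
  obtain ⟨f, hf⟩ := coefSpace_spec c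
  obtain ⟨C, hC⟩ := hf.norm.bddAbove_range
  exact ⟨C, fun N => hC ⟨N, rfl⟩⟩

/-- the sequence of partial sums, as a bounded function -/
noncomputable def philm (G : ℕ → E) : coefSpace G →ₗ[ℝ] (ℕ →ᵇ E) where
  toFun c := BoundedContinuousFunction.ofNormedAddCommGroup (pS G c.1)
    continuous_of_discreteTopology (exists_bound c).choose (exists_bound c).choose_spec
  map_add' c d := by
    ext N
    simp [pS_add]
  map_smul' a c := by
    ext N
    simp [pS_smul]

lemma philm_apply (G : ℕ → E) (c : coefSpace G) (N : ℕ) : philm G c N = pS G c.1 N := rfl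

lemma philm_inj {G : ℕ → E} (hGn : ∀ n, G n ≠ 0) : Function.Injective (philm G) := by
  rw [injective_iff_map_eq_zero]
  intro c hc
  have hN : ∀ N, pS G c.1 N = 0 := by
    intro N
    have h0 : ((philm G c : ℕ →ᵇ E) : ℕ → E) N = 0 := by rw [hc]; simp
    simpa [philm_apply] using h0
  have : ∀ n, c.1 n = 0 := by
    intro n
    have h := pS_succ_sub G c.1 n
    rw [hN, hN, sub_zero] at h
    rcases smul_eq_zero.1 h.symm with h' | h'
    · exact h'
    · exact absurd h' (hGn n)
  ext n
  exact this n

/-- Type synonym to avoid the subtype topology. -/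
noncomputable def XS (G : ℕ → E) : Type _ := coefSpace G

noncomputable instance {G : ℕ → E} : AddCommGroup (XS G) :=
  inferInstanceAs (AddCommGroup (coefSpace G))

noncomputable instance {G : ℕ → E} : Module ℝ (XS G) :=
  inferInstanceAs (Module ℝ (coefSpace G))

/-- the underlying coefficient sequence -/
def XS.seq {G : ℕ → E} (c : XS G) : ℕ → ℝ := (show coefSpace G from c).1

def XS.ofCoef {G : ℕ → E} (c : coefSpace G) : XS G := c

lemma XS.seq_ofCoef {G : ℕ → E} (c : coefSpace G) : (XS.ofCoef c).seq = c.1 := rfl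

lemma XS.seq_sub {G : ℕ → E} (c d : XS G) : (c - d).seq = c.seq - d.seq := rfl

lemma XS.spec {G : ℕ → E} (c : XS G) : ∃ f, Tendsto (pS G c.seq) atTop (nhds f) :=
  (show coefSpace G from c).2

lemma XS.ext' {G : ℕ → E} {c d : XS G} (h : c.seq = d.seq) : c = d := Subtype.ext h

noncomputable def philmX (G : ℕ → E) : XS G →ₗ[ℝ] (ℕ →ᵇ E) := philm G

lemma philmX_apply (G : ℕ → E) (c : XS G) (N : ℕ) : philmX G c N = pS G c.seq N := rfl

lemma philmX_inj {G : ℕ → E} (hGn : ∀ n, G n ≠ 0) : Function.Injective (philmX G) :=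
  fun a b h => philm_inj hGn h

theorem basis_bound {E : Type*} [NormedAddCommGroup E] [NormedSpace ℝ E] [CompleteSpace E]
    (G : ℕ → E) (hGn : ∀ n, G n ≠ 0)
    (hbasis : ∀ f : E, ∃! c : ℕ → ℝ,
      Tendsto (fun N => ∑ n ∈ Finset.range N, c n • G n) atTop (nhds f)) :
    ∃ K, 1 ≤ K ∧ ∀ (c : ℕ → ℝ) (f : E),
      Tendsto (fun N => ∑ n ∈ Finset.range N, c n • G n) atTop (nhds f) →
      ∀ N, ‖∑ n ∈ Finset.range N, c n • G n‖ ≤ K * ‖f‖ := by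
  letI : NormedAddCommGroup (XS G) :=
    NormedAddCommGroup.induced _ _ (philmX G) (philmX_inj hGn)
  letI : NormedSpace ℝ (XS G) := NormedSpace.induced ℝ _ _ (philmX G)
  have normX : ∀ c : XS G, ‖c‖ = ‖philmX G c‖ := fun _ => rfl
  have keyle : ∀ (c : XS G) (N : ℕ), ‖pS G c.seq N‖ ≤ ‖c‖ := by
    intro c N
    rw [normX]
    exact (philmX G c).norm_coe_le_norm N
  have hiso : Isometry (philmX G) := by
    apply AddMonoidHomClass.isometry_of_norm
    intro x; rfl
  haveI : CompleteSpace (XS G) := by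
    apply Metric.complete_of_cauchySeq_tendsto
    intro u hu
    obtain ⟨v, hv⟩ := cauchySeq_tendsto_of_complete (hiso.uniformContinuous.comp_cauchySeq hu)
    have hvk : Tendsto (fun k => philmX G (u k)) atTop (nhds v) := hv
    have hcoordCauchy : ∀ n, CauchySeq (fun k => (u k).seq n) := by
      intro n
      have hGpos : 0 < ‖G n‖ := norm_pos_iff.2 (hGn n)
      rw [Metric.cauchySeq_iff]
      intro ε hε
      obtain ⟨M, hM⟩ := Metric.cauchySeq_iff.1 hu (ε * ‖G n‖ / 2) (by positivity)
      refine ⟨M, fun k hk j hj => ?_⟩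
      have h1 : ((u k).seq n - (u j).seq n) • G n =
          pS G (u k - u j).seq (n + 1) - pS G (u k - u j).seq n := by
        rw [pS_succ_sub, XS.seq_sub, Pi.sub_apply]
      have e1 : ‖((u k).seq n - (u j).seq n) • G n‖ = dist ((u k).seq n) ((u j).seq n) * ‖G n‖ := by
        rw [norm_smul, Real.norm_eq_abs, Real.dist_eq]
      have h2 : dist ((u k).seq n) ((u j).seq n) * ‖G n‖ ≤ 2 * dist (u k) (u j) := by
        calc dist ((u k).seq n) ((u j).seq n) * ‖G n‖
            = ‖pS G (u k - u j).seq (n + 1) - pS G (u k - u j).seq n‖ := by rw [← e1, h1]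
          _ ≤ ‖pS G (u k - u j).seq (n + 1)‖ + ‖pS G (u k - u j).seq n‖ := norm_sub_le _ _
          _ ≤ ‖u k - u j‖ + ‖u k - u j‖ := add_le_add (keyle _ _) (keyle _ _)
          _ = 2 * dist (u k) (u j) := by rw [dist_eq_norm]; ring
      have h3 := hM k hk j hj
      nlinarith [dist_nonneg (x := (u k).seq n) (y := (u j).seq n)]
    choose climit hclimit using fun n => cauchySeq_tendsto_of_complete (hcoordCauchy n)
    have hSN : ∀ N, Tendsto (fun k => pS G (u k).seq N) atTop (nhds (pS G climit N)) := by
      intro N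
      unfold pS
      exact tendsto_finset_sum _ (fun n _ => (hclimit n).smul_const (G n))
    have hSNv : ∀ N, Tendsto (fun k => pS G (u k).seq N) atTop (nhds (v N)) := by
      intro N
      have h : Tendsto (fun k => (philmX G (u k)) N) atTop (nhds (v N)) := by
        refine tendsto_iff_dist_tendsto_zero.2 ?_
        have hv0 : Tendsto (fun k => dist (philmX G (u k)) v) atTop (nhds 0) :=
          tendsto_iff_dist_tendsto_zero.1 hvk
        exact squeeze_zero (fun k => dist_nonneg)
          (fun k => BoundedContinuousFunction.dist_coe_le_dist N) hv0
      simpa [philmX_apply] using h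
    have hvN : ∀ N, v N = pS G climit N := fun N => tendsto_nhds_unique (hSNv N) (hSN N)
    have hvC : CauchySeq (fun N => v N) := by
      rw [Metric.cauchySeq_iff]
      intro ε hε
      obtain ⟨k, hk⟩ := (Metric.tendsto_atTop.1 hvk (ε / 3) (by positivity))
      have hk' : dist (philmX G (u k)) v < ε / 3 := hk k le_rfl
      obtain ⟨f, hf⟩ := XS.spec (u k)
      obtain ⟨M, hM⟩ := Metric.cauchySeq_iff.1 hf.cauchySeq (ε / 3) (by positivity)
      refine ⟨M, fun N hN N' hN' => ?_⟩
      have b1 : dist (v N) (pS G (u k).seq N) < ε / 3 := by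
        calc dist (v N) (pS G (u k).seq N) = dist ((philmX G (u k)) N) (v N) := by
              rw [dist_comm]; rfl
          _ ≤ dist (philmX G (u k)) v := BoundedContinuousFunction.dist_coe_le_dist N
          _ < ε / 3 := hk'
      have b3 : dist (pS G (u k).seq N') (v N') < ε / 3 := by
        calc dist (pS G (u k).seq N') (v N') = dist ((philmX G (u k)) N') (v N') := rfl
          _ ≤ dist (philmX G (u k)) v := BoundedContinuousFunction.dist_coe_le_dist N'
          _ < ε / 3 := hk'
      have b2 : dist (pS G (u k).seq N) (pS G (u k).seq N') < ε / 3 := hM N hN N' hN'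
      calc dist (v N) (v N')
          ≤ dist (v N) (pS G (u k).seq N) + dist (pS G (u k).seq N) (pS G (u k).seq N')
              + dist (pS G (u k).seq N') (v N') := dist_triangle4 _ _ _ _
        _ < ε / 3 + ε / 3 + ε / 3 := by linarith
        _ = ε := by ring
    obtain ⟨F, hF⟩ := cauchySeq_tendsto_of_complete hvC
    have hmem : climit ∈ coefSpace G := by
      refine ⟨F, ?_⟩
      have : (fun N => v N) = pS G climit := funext hvN
      rwa [this] at hF
    set cX : XS G := XS.ofCoef ⟨climit, hmem⟩ with hcX
    have hphi : philmX G cX = v := by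
      ext N
      exact (hvN N).symm
    refine ⟨cX, tendsto_iff_dist_tendsto_zero.2 ?_⟩
    have hdist : ∀ k, dist (u k) cX = dist (philmX G (u k)) v := by
      intro k
      rw [← hphi, hiso.dist_eq]
    simp only [hdist]
    exact tendsto_iff_dist_tendsto_zero.1 hvk
  -- the sum operator
  have hTend : ∀ c : XS G,
      Tendsto (pS G c.1) atTop (nhds (XS.spec c).choose) :=
    fun c => (XS.spec c).choose_spec
  have hmap_add : ∀ a b : XS G,
      (XS.spec (a + b)).choose = (XS.spec a).choose + (XS.spec b).choose := by
    intro a b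
    refine tendsto_nhds_unique (hTend (a + b)) ?_
    have h := (hTend a).add (hTend b)
    convert h using 1
    funext N; exact pS_add G a.1 b.1 N
  have hmap_smul : ∀ (r : ℝ) (a : XS G),
      (XS.spec (r • a)).choose = r • (XS.spec a).choose := by
    intro r a
    refine tendsto_nhds_unique (hTend (r • a)) ?_
    have h := (hTend a).const_smul r
    convert h using 1
    funext N; exact pS_smul G r a.1 N
  let Tlin : XS G →ₗ[ℝ] E :=
    { toFun := fun c => (XS.spec c).choose
      map_add' := hmap_add
      map_smul' := hmap_smul }
  have hTbound : ∀ c : XS G, ‖Tlin c‖ ≤ 1 * ‖c‖ := by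
    intro c
    rw [one_mul]
    exact le_of_tendsto' (hTend c).norm (fun N => keyle c N)
  have hcont : Continuous Tlin := AddMonoidHomClass.continuous_of_bound Tlin 1 hTbound
  have hinj : Function.Injective Tlin := by
    rw [injective_iff_map_eq_zero]
    intro c hc
    have h1 : Tendsto (fun N => ∑ n ∈ Finset.range N, c.seq n • G n) atTop (nhds 0) := by
      have := hTend c
      rw [show (XS.spec c).choose = Tlin c from rfl, hc] at this
      exact this
    have h2 : Tendsto (fun N => ∑ n ∈ Finset.range N, (0 : ℕ → ℝ) n • G n) atTop
        (nhds (0 : E)) := by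
      have : (fun N => ∑ n ∈ Finset.range N, (0 : ℕ → ℝ) n • G n) = fun _ => (0 : E) := by
        funext N; simp
      rw [this]; exact tendsto_const_nhds
    have := (hbasis 0).unique h1 h2
    exact XS.ext' this
  have hsurj : Function.Surjective Tlin := by
    intro f
    obtain ⟨c, hc, -⟩ := hbasis f
    have hmem : c ∈ coefSpace G := ⟨f, hc⟩
    exact ⟨XS.ofCoef ⟨c, hmem⟩, tendsto_nhds_unique (hTend (XS.ofCoef ⟨c, hmem⟩)) hc⟩
  let eqv := LinearEquiv.ofBijective Tlin ⟨hinj, hsurj⟩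
  have heqvcont : Continuous eqv := hcont
  let e := eqv.toContinuousLinearEquivOfContinuous heqvcont
  refine ⟨max ‖(e.symm : E →L[ℝ] XS G)‖ 1, le_max_right _ _, ?_⟩
  intro c f hc N
  have hmem : c ∈ coefSpace G := ⟨f, hc⟩
  have he : e (XS.ofCoef ⟨c, hmem⟩) = f := tendsto_nhds_unique (hTend (XS.ofCoef ⟨c, hmem⟩)) hc
  have hs : e.symm f = XS.ofCoef ⟨c, hmem⟩ := by rw [← he, ContinuousLinearEquiv.symm_apply_apply]
  calc ‖∑ n ∈ Finset.range N, c n • G n‖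
      = ‖pS G (XS.ofCoef ⟨c, hmem⟩).seq N‖ := rfl
    _ ≤ ‖XS.ofCoef ⟨c, hmem⟩‖ := keyle _ N
    _ = ‖e.symm f‖ := by rw [hs]
    _ ≤ ‖(e.symm : E →L[ℝ] XS G)‖ * ‖f‖ := (e.symm : E →L[ℝ] XS G).le_opNorm f
    _ ≤ max ‖(e.symm : E →L[ℝ] XS G)‖ 1 * ‖f‖ := by
        gcongr
        exact le_max_left _ _
end OZAux

open MeasureTheory Filter OZAux

/-- (Olson–Zalik) If a system of translates `{g(·-λ_n)}` is a Schauder basis of `L^p(ℝ)`,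
`1 < p < ∞` (i.e. every `f` has a unique norm-convergent expansion
`f = ∑_n c_n g(·-λ_n)`), then the sequence `{λ_n}` is uniformly discrete:
`inf_{n ≠ m} |λ_n - λ_m| > 0`.  (In particular no system of translates is an
unconditional Schauder basis of `L^p(ℝ)` for `p > 2`.) -/
theorem stmt18 (p : ℝ) (hp1 : 1 < p) [Fact (1 ≤ ENNReal.ofReal p)]
    (g : ℝ → ℝ) (lam : ℕ → ℝ)
    (G : ℕ → Lp ℝ (ENNReal.ofReal p) (volume : Measure ℝ))
    (hG : ∀ n, (G n : ℝ → ℝ) =ᵐ[volume] fun x => g (x - lam n))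
    (hbasis : ∀ f : Lp ℝ (ENNReal.ofReal p) (volume : Measure ℝ),
      ∃! c : ℕ → ℝ,
        Tendsto (fun N => ∑ n ∈ Finset.range N, c n • G n) atTop (nhds f)) :
    ∃ δ > 0, ∀ n m : ℕ, n ≠ m → δ ≤ |lam n - lam m| := by
  have hq_top : ENNReal.ofReal p ≠ ⊤ := ENNReal.ofReal_ne_top
  -- every `G n` is nonzero
  have hGn : ∀ n, G n ≠ 0 := by
    intro n h0
    have h1 : Tendsto (fun N => ∑ k ∈ Finset.range N, (0 : ℕ → ℝ) k • G k) atTop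
        (nhds (0 : Lp ℝ (ENNReal.ofReal p) volume)) := by
      have he : (fun N => ∑ k ∈ Finset.range N, (0 : ℕ → ℝ) k • G k)
          = fun _ => (0 : Lp ℝ (ENNReal.ofReal p) volume) := by
        funext N; simp
      rw [he]; exact tendsto_const_nhds
    have h2 : Tendsto (fun N => ∑ k ∈ Finset.range N, (Pi.single n 1 : ℕ → ℝ) k • G k) atTop
        (nhds (0 : Lp ℝ (ENNReal.ofReal p) volume)) := by
      have he : (fun N => ∑ k ∈ Finset.range N, (Pi.single n 1 : ℕ → ℝ) k • G k)
          = fun _ => (0 : Lp ℝ (ENNReal.ofReal p) volume) := by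
        funext N
        apply Finset.sum_eq_zero
        intro k _
        by_cases hkn : k = n
        · subst hkn; rw [h0, smul_zero]
        · rw [Pi.single_eq_of_ne hkn, zero_smul]
      rw [he]; exact tendsto_const_nhds
    have hu := (hbasis 0).unique h2 h1
    have := congrFun hu n
    simp [Pi.single_eq_same] at this
  obtain ⟨K, hK1, hK⟩ := basis_bound G hGn hbasis
  have hKpos : (0 : ℝ) < K := lt_of_lt_of_le one_pos hK1
  -- the key lower bound from the basis constant
  have hkey : ∀ n m : ℕ, n < m → ‖G n‖ ≤ K * ‖G n - G m‖ := by
    intro n m hnm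
    set c : ℕ → ℝ := Pi.single n 1 - Pi.single m 1 with hc
    have hsum : ∀ N, ∑ k ∈ Finset.range N, c k • G k =
        (∑ k ∈ Finset.range N, (Pi.single n 1 : ℕ → ℝ) k • G k)
        - ∑ k ∈ Finset.range N, (Pi.single m 1 : ℕ → ℝ) k • G k := by
      intro N
      rw [← Finset.sum_sub_distrib]
      apply Finset.sum_congr rfl
      intro k _
      simp [hc, sub_smul]
    have hsingle : ∀ (j N : ℕ), j < N →
        ∑ k ∈ Finset.range N, (Pi.single j 1 : ℕ → ℝ) k • G k = G j := by
      intro j N hj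
      rw [Finset.sum_eq_single_of_mem j (Finset.mem_range.2 hj)]
      · simp
      · intro k _ hkj; rw [Pi.single_eq_of_ne hkj, zero_smul]
    have hsingle0 : ∀ (j N : ℕ), N ≤ j →
        ∑ k ∈ Finset.range N, (Pi.single j 1 : ℕ → ℝ) k • G k = 0 := by
      intro j N hj
      apply Finset.sum_eq_zero
      intro k hk
      have : k ≠ j := by
        have := Finset.mem_range.1 hk; omega
      rw [Pi.single_eq_of_ne this, zero_smul]
    have htend : Tendsto (fun N => ∑ k ∈ Finset.range N, c k • G k) atTop
        (nhds (G n - G m)) := by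
      apply tendsto_atTop_of_eventually_const (i₀ := m + 1)
      intro N hN
      rw [hsum, hsingle n N (by omega), hsingle m N (by omega)]
    have hb := hK c (G n - G m) htend (n + 1)
    rw [hsum, hsingle n (n + 1) (by omega), hsingle0 m (n + 1) (by omega), sub_zero] at hb
    exact hb
  -- the translation structure
  let sh : ℝ → C(ℝ, ℝ) := fun t => ⟨fun x => x + t, continuous_id.add continuous_const⟩
  have shmp : ∀ t, MeasurePreserving (sh t) (volume : Measure ℝ) volume := fun t =>
    measurePreserving_add_right volume t
  let τ : ℝ → Lp ℝ (ENNReal.ofReal p) (volume : Measure ℝ) := fun t =>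
    Lp.compMeasurePreserving (sh t) (shmp t) (G 0)
  have hshcont : Continuous sh := by
    apply ContinuousMap.continuous_of_continuous_uncurry
    exact (continuous_snd.add continuous_fst)
  have hτcont : Continuous τ :=
    Continuous.compMeasurePreservingLp continuous_const hshcont shmp hq_top
  have hτ : ∀ t, (τ t : ℝ → ℝ) =ᵐ[volume] fun x => g (x + t - lam 0) := by
    intro t
    refine (Lp.coeFn_compMeasurePreserving (G 0) (shmp t)).trans ?_
    exact ((shmp t).quasiMeasurePreserving).ae_eq_comp (hG 0)
  have hτG : ∀ n, τ (lam 0 - lam n) = G n := by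
    intro n
    apply Lp.ext
    refine (hτ _).trans ?_
    refine EventuallyEq.trans ?_ (hG n).symm
    apply Filter.EventuallyEq.of_eq
    funext x
    congr 1
    ring
  have hτnorm : ∀ t, ‖τ t‖ = ‖G 0‖ := fun t => Lp.norm_compMeasurePreserving (G 0) (shmp t)
  have hshift : ∀ s t, Lp.compMeasurePreserving (sh s) (shmp s) (τ t) = τ (t + s) := by
    intro s t
    apply Lp.ext
    refine (Lp.coeFn_compMeasurePreserving (τ t) (shmp s)).trans ?_
    refine EventuallyEq.trans (((shmp s).quasiMeasurePreserving).ae_eq_comp (hτ t)) ?_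
    refine EventuallyEq.trans ?_ (hτ (t + s)).symm
    apply Filter.EventuallyEq.of_eq
    funext x
    show g (x + s + t - lam 0) = g (x + (t + s) - lam 0)
    congr 1
    ring
  have hnorm : ∀ n m : ℕ, ‖τ (lam m - lam n) - τ 0‖ = ‖G n - G m‖ := by
    intro n m
    set s := lam 0 - lam m with hs
    have h := Lp.norm_compMeasurePreserving (τ (lam m - lam n) - τ 0) (shmp s)
    rw [map_sub, hshift, hshift] at h
    have e1 : lam m - lam n + s = lam 0 - lam n := by rw [hs]; ring
    have e2 : (0 : ℝ) + s = lam 0 - lam m := by rw [hs]; ring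
    rw [e1, e2, hτG n, hτG m] at h
    exact h.symm
  have hGnorm : ∀ n, ‖G n‖ = ‖G 0‖ := fun n => by rw [← hτG n, hτnorm]
  have hc0 : (0 : ℝ) < ‖G 0‖ := norm_pos_iff.2 (hGn 0)
  set ε : ℝ := ‖G 0‖ / K with hε
  have hεpos : 0 < ε := div_pos hc0 hKpos
  -- lower bound on distances of distinct translates
  have hlow : ∀ n m : ℕ, n ≠ m → ε ≤ ‖τ (lam m - lam n) - τ 0‖ := by
    intro n m hnm
    rcases lt_or_gt_of_ne hnm with h | h
    · rw [hnorm n m]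
      rw [hε, div_le_iff₀ hKpos, mul_comm]
      calc ‖G 0‖ = ‖G n‖ := (hGnorm n).symm
        _ ≤ K * ‖G n - G m‖ := hkey n m h
    · rw [hnorm n m, norm_sub_rev]
      rw [hε, div_le_iff₀ hKpos, mul_comm]
      calc ‖G 0‖ = ‖G m‖ := (hGnorm m).symm
        _ ≤ K * ‖G m - G n‖ := hkey m n h
  -- continuity of translation at 0 gives the uniform gap
  have hcont0 : ContinuousAt τ 0 := hτcont.continuousAt
  rw [Metric.continuousAt_iff] at hcont0
  obtain ⟨δ, hδpos, hδ⟩ := hcont0 ε hεpos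
  refine ⟨δ, hδpos, ?_⟩
  intro n m hnm
  by_contra hlt
  push_neg at hlt
  have hdist : dist (lam m - lam n) (0 : ℝ) < δ := by
    rw [Real.dist_eq, sub_zero, abs_sub_comm]
    simpa using hlt
  have := hδ hdist
  rw [dist_eq_norm] at this
  exact absurd this (not_lt.2 (hlow n m hnm))
end
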